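/- arXiv:2312.13526 — 4 statements merged into one kernel-verified Lean document; each statement's English description precedes it below -/
import Mathlib

section
/- The pointer-advancement definition of dominance and the algebraic definition of dominance are equivalent: for nonempty finite sequences A and B of real numbers, there exists a valid pointer-advancement sequence witnessing A ≼ B if and only if for every i ∈ [|A|] there exists j ∈ [|B|] satisfying the four max/min inequalities. -/
/-- Pointer-advancement definition of dominance (0-indexed). -/
def PtrDom (A B : List ℝ) : Prop :=
  ∃ a b : ℕ → ℕ,
    a 0 = 0 ∧ b 0 = 0 ∧
    a (A.length + B.length - 2) = A.length - 1 ∧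
    b (A.length + B.length - 2) = B.length - 1 ∧
    (∀ k, k + 1 ≤ A.length + B.length - 2 →
      ((a (k + 1) = a k + 1 ∧ b (k + 1) = b k) ∨
       (a (k + 1) = a k ∧ b (k + 1) = b k + 1))) ∧
    (∀ k ≤ A.length + B.length - 2,
      a k < A.length ∧ b k < B.length ∧ A.getD (a k) 0 ≤ B.getD (b k) 0)

/-- Algebraic definition of dominance. -/
def AlgDom (A B : List ℝ) : Prop :=
  ∀ i, (hi : i < A.length) → ∃ j, ∃ (hj : j < B.length),
    (Finset.Ico i A.length).sup' ⟨i, Finset.mem_Ico.mpr ⟨le_rfl, hi⟩⟩ (fun k => A.getD k 0)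
      ≤ (Finset.Ico j B.length).sup' ⟨j, Finset.mem_Ico.mpr ⟨le_rfl, hj⟩⟩ (fun k => B.getD k 0) ∧
    (Finset.Ico i A.length).inf' ⟨i, Finset.mem_Ico.mpr ⟨le_rfl, hi⟩⟩ (fun k => A.getD k 0)
      ≤ (Finset.Ico j B.length).inf' ⟨j, Finset.mem_Ico.mpr ⟨le_rfl, hj⟩⟩ (fun k => B.getD k 0) ∧
    (Finset.Iic i).sup' Finset.nonempty_Iic (fun k => A.getD k 0)
      ≤ (Finset.Iic j).sup' Finset.nonempty_Iic (fun k => B.getD k 0) ∧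
    (Finset.Iic i).inf' Finset.nonempty_Iic (fun k => A.getD k 0)
      ≤ (Finset.Iic j).inf' Finset.nonempty_Iic (fun k => B.getD k 0)

namespace PtrAlg

noncomputable def msup (f : ℕ → ℝ) (lo hi : ℕ) : ℝ :=
  if h : lo ≤ hi then (Finset.Icc lo hi).sup' ⟨lo, Finset.mem_Icc.mpr ⟨le_rfl, h⟩⟩ f else 0

noncomputable def minf (f : ℕ → ℝ) (lo hi : ℕ) : ℝ :=
  if h : lo ≤ hi then (Finset.Icc lo hi).inf' ⟨lo, Finset.mem_Icc.mpr ⟨le_rfl, h⟩⟩ f else 0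

theorem le_msup {f : ℕ → ℝ} {lo hi k : ℕ} (h1 : lo ≤ k) (h2 : k ≤ hi) :
    f k ≤ msup f lo hi := by
  rw [msup, dif_pos (le_trans h1 h2)]
  exact Finset.le_sup' f (Finset.mem_Icc.mpr ⟨h1, h2⟩)

theorem msup_le {f : ℕ → ℝ} {lo hi : ℕ} {c : ℝ} (h : lo ≤ hi)
    (hb : ∀ k, lo ≤ k → k ≤ hi → f k ≤ c) : msup f lo hi ≤ c := by
  rw [msup, dif_pos h]
  exact Finset.sup'_le _ _ (fun k hk => hb k (Finset.mem_Icc.mp hk).1 (Finset.mem_Icc.mp hk).2)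

theorem exists_msup (f : ℕ → ℝ) {lo hi : ℕ} (h : lo ≤ hi) :
    ∃ k, lo ≤ k ∧ k ≤ hi ∧ msup f lo hi = f k := by
  rw [msup, dif_pos h]
  obtain ⟨k, hk, hke⟩ := Finset.exists_mem_eq_sup' ⟨lo, Finset.mem_Icc.mpr ⟨le_rfl, h⟩⟩ f
  exact ⟨k, (Finset.mem_Icc.mp hk).1, (Finset.mem_Icc.mp hk).2, hke⟩

theorem minf_le {f : ℕ → ℝ} {lo hi k : ℕ} (h1 : lo ≤ k) (h2 : k ≤ hi) :
    minf f lo hi ≤ f k := by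
  rw [minf, dif_pos (le_trans h1 h2)]
  exact Finset.inf'_le f (Finset.mem_Icc.mpr ⟨h1, h2⟩)

theorem le_minf {f : ℕ → ℝ} {lo hi : ℕ} {c : ℝ} (h : lo ≤ hi)
    (hb : ∀ k, lo ≤ k → k ≤ hi → c ≤ f k) : c ≤ minf f lo hi := by
  rw [minf, dif_pos h]
  exact Finset.le_inf' _ _ (fun k hk => hb k (Finset.mem_Icc.mp hk).1 (Finset.mem_Icc.mp hk).2)

theorem exists_minf (f : ℕ → ℝ) {lo hi : ℕ} (h : lo ≤ hi) :
    ∃ k, lo ≤ k ∧ k ≤ hi ∧ minf f lo hi = f k := by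
  rw [minf, dif_pos h]
  obtain ⟨k, hk, hke⟩ := Finset.exists_mem_eq_inf' ⟨lo, Finset.mem_Icc.mpr ⟨le_rfl, h⟩⟩ f
  exact ⟨k, (Finset.mem_Icc.mp hk).1, (Finset.mem_Icc.mp hk).2, hke⟩

theorem msup_mono {f : ℕ → ℝ} {lo hi lo' hi' : ℕ} (hlo : lo' ≤ lo) (hhi : hi ≤ hi')
    (h : lo ≤ hi) : msup f lo hi ≤ msup f lo' hi' :=
  msup_le h (fun k hk1 hk2 => le_msup (le_trans hlo hk1) (le_trans hk2 hhi))

theorem minf_mono {f : ℕ → ℝ} {lo hi lo' hi' : ℕ} (hlo : lo' ≤ lo) (hhi : hi ≤ hi')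
    (h : lo ≤ hi) : minf f lo' hi' ≤ minf f lo hi :=
  le_minf h (fun k hk1 hk2 => minf_le (le_trans hlo hk1) (le_trans hk2 hhi))

theorem minf_le_msup {f : ℕ → ℝ} {lo hi : ℕ} (h : lo ≤ hi) : minf f lo hi ≤ msup f lo hi :=
  le_trans (minf_le le_rfl h) (le_msup le_rfl h)

theorem msup_shift (f : ℕ → ℝ) {lo hi : ℕ} (h : lo ≤ hi) :
    msup (fun k => f (k + 1)) lo hi = msup f (lo + 1) (hi + 1) := by
  apply le_antisymm
  · exact msup_le h (fun k hk1 hk2 => le_msup (by omega) (by omega))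
  · apply msup_le (by omega)
    intro k hk1 hk2
    have he : f k = (fun k' => f (k' + 1)) (k - 1) := by
      have hx : k - 1 + 1 = k := by omega
      simp only [hx]
    rw [he]
    exact le_msup (f := fun k' => f (k' + 1)) (lo := lo) (hi := hi) (by omega) (by omega)

theorem minf_shift (f : ℕ → ℝ) {lo hi : ℕ} (h : lo ≤ hi) :
    minf (fun k => f (k + 1)) lo hi = minf f (lo + 1) (hi + 1) := by
  apply le_antisymm
  · apply le_minf (by omega)
    intro k hk1 hk2
    have he : f k = (fun k' => f (k' + 1)) (k - 1) := by
      have hx : k - 1 + 1 = k := by omega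
      simp only [hx]
    rw [he]
    exact minf_le (f := fun k' => f (k' + 1)) (lo := lo) (hi := hi) (by omega) (by omega)
  · exact le_minf h (fun k hk1 hk2 => minf_le (by omega) (by omega))

theorem msup_self (f : ℕ → ℝ) (k : ℕ) : msup f k k = f k :=
  le_antisymm (msup_le le_rfl (fun k' h1 h2 => le_of_eq (congrArg f (by omega : k' = k))))
    (le_msup le_rfl le_rfl)

theorem minf_self (f : ℕ → ℝ) (k : ℕ) : minf f k k = f k :=
  le_antisymm (minf_le le_rfl le_rfl)
    (le_minf le_rfl (fun k' h1 h2 => le_of_eq (congrArg f (by omega : k = k'))))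

/-- Functional form of the algebraic dominance condition.
Conjunct order: suffix max, suffix min, prefix max, prefix min. -/
def AlgF (f : ℕ → ℝ) (n : ℕ) (g : ℕ → ℝ) (m : ℕ) : Prop :=
  ∀ i, i < n → ∃ j, j < m ∧
    msup f i (n - 1) ≤ msup g j (m - 1) ∧
    minf f i (n - 1) ≤ minf g j (m - 1) ∧
    msup f 0 i ≤ msup g 0 j ∧
    minf f 0 i ≤ minf g 0 j

/-- Functional form of pointer dominance. -/
def PtrF (f g : ℕ → ℝ) (n m : ℕ) : Prop :=
  ∃ a b : ℕ → ℕ,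
    a 0 = 0 ∧ b 0 = 0 ∧
    a (n + m - 2) = n - 1 ∧
    b (n + m - 2) = m - 1 ∧
    (∀ k, k + 1 ≤ n + m - 2 →
      ((a (k + 1) = a k + 1 ∧ b (k + 1) = b k) ∨
       (a (k + 1) = a k ∧ b (k + 1) = b k + 1))) ∧
    (∀ k ≤ n + m - 2, a k < n ∧ b k < m ∧ f (a k) ≤ g (b k))


theorem key {f g : ℕ → ℝ} {n m : ℕ} (hn : 2 ≤ n) (hm : 2 ≤ m)
    (hAlg : AlgF f n g m)
    (hFA : ¬ AlgF (fun k => f (k + 1)) (n - 1) g m)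
    (hFB : ¬ AlgF f n (fun k => g (k + 1)) (m - 1)) : False := by
  classical
  rw [AlgF] at hFA hFB
  obtain ⟨i', hFA⟩ := not_forall.mp hFA
  obtain ⟨hi'lt, hneA⟩ := _root_.not_imp.mp hFA
  obtain ⟨i₂, hFB⟩ := not_forall.mp hFB
  obtain ⟨hi₂n, hneB⟩ := _root_.not_imp.mp hFB
  set i₁ := i' + 1 with hi₁def
  have hi₁1 : 1 ≤ i₁ := by omega
  have hi₁n : i₁ < n := by omega
  have hFA' : ∀ j, j < m →
      ¬(msup f i₁ (n-1) ≤ msup g j (m-1) ∧ minf f i₁ (n-1) ≤ minf g j (m-1) ∧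
        msup f 1 i₁ ≤ msup g 0 j ∧ minf f 1 i₁ ≤ minf g 0 j) := by
    intro j hj hC
    apply hneA
    refine ⟨j, hj, ?_, ?_, ?_, ?_⟩
    · rw [msup_shift f (by omega), show i' + 1 = i₁ from rfl,
        show n - 1 - 1 + 1 = n - 1 by omega]
      exact hC.1
    · rw [minf_shift f (by omega), show i' + 1 = i₁ from rfl,
        show n - 1 - 1 + 1 = n - 1 by omega]
      exact hC.2.1
    · rw [msup_shift f (by omega), show (0:ℕ) + 1 = 1 from rfl,
        show i' + 1 = i₁ from rfl]
      exact hC.2.2.1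
    · rw [minf_shift f (by omega), show (0:ℕ) + 1 = 1 from rfl,
        show i' + 1 = i₁ from rfl]
      exact hC.2.2.2
  have hFB' : ∀ j, 1 ≤ j → j < m →
      ¬(msup f i₂ (n-1) ≤ msup g j (m-1) ∧ minf f i₂ (n-1) ≤ minf g j (m-1) ∧
        msup f 0 i₂ ≤ msup g 1 j ∧ minf f 0 i₂ ≤ minf g 1 j) := by
    intro j hj1 hjm hC
    apply hneB
    refine ⟨j - 1, by omega, ?_, ?_, ?_, ?_⟩
    · rw [msup_shift g (by omega), show j - 1 + 1 = j by omega,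
        show m - 1 - 1 + 1 = m - 1 by omega]
      exact hC.1
    · rw [minf_shift g (by omega), show j - 1 + 1 = j by omega,
        show m - 1 - 1 + 1 = m - 1 by omega]
      exact hC.2.1
    · rw [msup_shift g (by omega), show (0:ℕ) + 1 = 1 from rfl,
        show j - 1 + 1 = j by omega]
      exact hC.2.2.1
    · rw [minf_shift g (by omega), show (0:ℕ) + 1 = 1 from rfl,
        show j - 1 + 1 = j by omega]
      exact hC.2.2.2
  clear hneA hneB hFA hFB
  -- Step 1: facts about the witness of i₁
  obtain ⟨j₁, hj₁m, w1, w2, w3, w4⟩ := hAlg i₁ hi₁n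
  have hM₁PM : msup f 1 i₁ ≤ msup f 0 i₁ := msup_mono (by omega) le_rfl hi₁1
  have hQm1 : minf g 0 j₁ < minf f 1 i₁ := by
    by_contra hc
    push_neg at hc
    exact hFA' j₁ hj₁m ⟨w1, w2, le_trans hM₁PM w3, hc⟩
  have hμf : ∀ k, 1 ≤ k → k ≤ i₁ → minf f 1 i₁ ≤ f k := fun k h1 h2 => minf_le h1 h2
  have hf0 : f 0 < minf f 1 i₁ := by
    by_contra hc
    push_neg at hc
    have h : minf f 1 i₁ ≤ minf f 0 i₁ := by
      apply le_minf (by omega)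
      intro k hk1 hk2
      rcases Nat.eq_zero_or_pos k with h0 | h1
      · rw [h0]; exact hc
      · exact minf_le h1 hk2
    linarith [le_trans h w4]
  have hf0Qm : f 0 ≤ minf g 0 j₁ := by
    have h : f 0 ≤ minf f 0 i₁ := by
      apply le_minf (by omega)
      intro k hk1 hk2
      rcases Nat.eq_zero_or_pos k with h0 | h1
      · exact le_of_eq (congrArg f h0.symm)
      · exact le_trans (le_of_lt hf0) (minf_le h1 hk2)
    exact le_trans h w4
  have hj₁1 : 1 ≤ j₁ := by
    rcases Nat.eq_zero_or_pos j₁ with h0 | h1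
    · exfalso
      have h2 : minf g 0 0 = g 0 := minf_self g 0
      have h3 : f 1 ≤ msup f 0 i₁ := le_msup (by omega) (by omega)
      have h4 : minf f 1 i₁ ≤ f 1 := minf_le le_rfl hi₁1
      rw [h0] at hQm1 w3
      rw [h2] at hQm1
      rw [msup_self] at w3
      linarith
    · exact h1
  -- Step 2 : β-kill
  have hβ : minf f 0 i₂ ≤ g 1 := by
    have h1 : minf f 0 i₂ ≤ f 0 := minf_le (by omega) (by omega)
    have h2 : minf g 0 j₁ ≤ g 1 := minf_le (by omega) hj₁1
    linarith
  by_cases hα : msup g 1 (m-1) < msup f i₂ (n-1)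
  · -- α branch
    obtain ⟨j₂, hj₂m, k1, k2, k3, k4⟩ := hAlg i₂ hi₂n
    have hj₂0 : j₂ = 0 := by
      by_contra hc
      have h1 : msup g j₂ (m-1) ≤ msup g 1 (m-1) := msup_mono (by omega) le_rfl (by omega)
      linarith
    rw [hj₂0] at k1 k2 k3 k4
    have hSM12 : msup f i₁ (n-1) < msup f i₂ (n-1) := by
      have h1 : msup g j₁ (m-1) ≤ msup g 1 (m-1) := msup_mono hj₁1 le_rfl (by omega)
      linarith
    have hi₂i₁ : i₂ < i₁ := by
      by_contra hc
      push_neg at hc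
      have : msup f i₂ (n-1) ≤ msup f i₁ (n-1) := msup_mono hc le_rfl (by omega)
      linarith
    obtain ⟨q, hq1, hq2, hqe⟩ := exists_msup f (lo := i₂) (hi := n-1) (by omega)
    have hq1' : 1 ≤ q := by
      rcases Nat.eq_zero_or_pos q with h0 | h1
      · exfalso
        have ha : f 1 ≤ msup f i₂ (n-1) := le_msup (by omega) (by omega)
        have hb : minf f 1 i₁ ≤ f 1 := minf_le le_rfl hi₁1
        rw [hqe, h0] at ha
        linarith
      · exact h1
    have hqi₁ : q ≤ i₁ := by
      by_contra hc
      push_neg at hc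
      have h1 : f q ≤ msup f i₁ (n-1) := le_msup (by omega) hq2
      rw [← hqe] at h1
      linarith
    have hB0μ : minf f 1 i₁ ≤ g 0 := by
      obtain ⟨c₀, hc₀0, hc₀m, hc₀e⟩ := exists_msup g (lo := 0) (hi := m-1) (by omega)
      rcases Nat.eq_zero_or_pos c₀ with h0 | h1
      · have h2 : minf f 1 i₁ ≤ f q := hμf q hq1' hqi₁
        rw [h0] at hc₀e
        rw [← hqe] at h2
        linarith [k1, hc₀e ▸ (le_refl (msup g 0 (m-1)))]
      · exfalso
        have h2 : g c₀ ≤ msup g 1 (m-1) := le_msup h1 hc₀m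
        rw [← hc₀e] at h2
        linarith
    -- q's witness is forced to column 0
    obtain ⟨jq, hjqm, l1, l2, l3, l4⟩ := hAlg q (by omega)
    have hjq0 : jq = 0 := by
      by_contra hc
      have h1 : msup g jq (m-1) ≤ msup g 1 (m-1) := msup_mono (by omega) le_rfl (by omega)
      have h2 : f q ≤ msup f q (n-1) := le_msup le_rfl hq2
      rw [← hqe] at h2
      linarith
    rw [hjq0] at l2
    obtain ⟨k, hkq, hkn, hke⟩ := exists_minf f (lo := q) (hi := n-1) hq2
    have hkμ : f k < minf f 1 i₁ := by
      have h2 : minf g 0 (m-1) ≤ minf g 0 j₁ := minf_mono le_rfl (by omega) (by omega)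
      rw [← hke]
      linarith
    have hki₁ : i₁ < k := by
      by_contra hc
      push_neg at hc
      have := hμf k (by omega) hc
      linarith
    have hstar : minf f i₁ (n-1) ≤ minf g 0 (m-1) := by
      have h1 : minf f i₁ (n-1) ≤ f k := minf_le (by omega) hkn
      have l2' : f k ≤ minf g 0 (m-1) := by rw [← hke]; exact l2
      exact le_trans h1 l2' 
    -- v : first small column
    have hex : ∃ u, g u < minf f 1 i₁ := by
      obtain ⟨v₀, hv₀0, hv₀j₁, hv₀e⟩ := exists_minf g (lo := 0) (hi := j₁) (by omega)
      exact ⟨v₀, by rw [← hv₀e]; exact hQm1⟩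
    set v := Nat.find hex with hvdef
    have hv : g v < minf f 1 i₁ := Nat.find_spec hex
    have hvj₁ : v ≤ j₁ := by
      obtain ⟨v₀, hv₀0, hv₀j₁, hv₀e⟩ := exists_minf g (lo := 0) (hi := j₁) (by omega)
      exact le_trans (Nat.find_min' hex (by rw [← hv₀e]; exact hQm1)) hv₀j₁
    have hv1 : 1 ≤ v := by
      rcases Nat.eq_zero_or_pos v with h0 | h1
      · exfalso; rw [h0] at hv; linarith
      · exact h1
    have hQmv : minf f 1 i₁ ≤ minf g 0 (v-1) := by
      apply le_minf (by omega)
      intro u hu1 hu2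
      exact not_lt.mp (Nat.find_min hex (by omega))
    -- dichotomy at v - 1
    have hc1 : msup f i₁ (n-1) ≤ msup g (v-1) (m-1) :=
      le_trans w1 (msup_mono (by omega) le_rfl (by omega))
    by_cases hc3 : msup f 1 i₁ ≤ msup g 0 (v-1)
    · -- M2
      have hc2 : minf g (v-1) (m-1) < minf f i₁ (n-1) := by
        by_contra hcc
        push_neg at hcc
        exact hFA' (v-1) (by omega) ⟨hc1, hcc, hc3, hQmv⟩
      have h1 : minf g 0 (m-1) ≤ minf g (v-1) (m-1) := minf_mono (by omega) le_rfl (by omega)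
      linarith
    · -- M1
      have hM1 := not_le.mp hc3
      have hg0 : g 0 ≤ msup g 0 (v-1) := le_msup le_rfl (by omega)
      obtain ⟨u, hu0, huj₁, hue⟩ := exists_msup g (lo := 0) (hi := j₁) (by omega)
      have hgu : msup f 1 i₁ ≤ g u := by
        rw [← hue]; exact le_trans hM₁PM w3
      have hu1 : 1 ≤ u := by
        rcases Nat.eq_zero_or_pos u with h0 | h1
        · exfalso; rw [h0] at hgu; linarith
        · exact h1
      have h2 : g u ≤ msup g 1 (m-1) := le_msup hu1 (by omega)
      have h4 : f q ≤ msup f 1 i₁ := le_msup hq1' hqi₁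
      linarith [hqe, hgu, h2, hα]
  · -- γ branch
    have hα' : msup f i₂ (n-1) ≤ msup g 1 (m-1) := not_lt.mp hα
    obtain ⟨j₂, hj₂m, k1, k2, k3, k4⟩ := hAlg i₂ hi₂n
    set P : ℕ → Prop := fun j => 1 ≤ j ∧ j ≤ m-1 ∧ msup f i₂ (n-1) ≤ msup g j (m-1) ∧
      minf f 0 i₂ ≤ minf g 1 j with hPdef
    have hP1 : P 1 := by
      refine ⟨le_rfl, by omega, hα', ?_⟩
      rw [minf_self]; exact hβ
    set J := Nat.findGreatest P (m-1) with hJdef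
    have hPJ : P J := Nat.findGreatest_spec (by omega : 1 ≤ m-1) hP1
    obtain ⟨hJ1, hJm, hJ3, hJ4⟩ := hPJ
    have hJmax : ∀ j, J < j → j ≤ m-1 → ¬ P j := fun j h1 h2 =>
      Nat.findGreatest_is_greatest h1 h2
    have hj₂J : j₂ ≤ J := by
      rcases Nat.eq_zero_or_pos j₂ with h0 | h1
      · omega
      · apply Nat.le_findGreatest (by omega : j₂ ≤ m-1)
        exact ⟨h1, by omega, k1, le_trans k4 (minf_mono (by omega) le_rfl h1)⟩
    have hSmJ : minf f i₂ (n-1) ≤ minf g J (m-1) :=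
      le_trans k2 (minf_mono hj₂J le_rfl (by omega))
    have hG2 : msup g 1 J < msup f 0 i₂ := by
      by_contra hc
      push_neg at hc
      exact hFB' J hJ1 (by omega) ⟨hJ3, hSmJ, hc, hJ4⟩
    have hB0PM : msup f 0 i₂ ≤ g 0 := by
      rcases Nat.eq_zero_or_pos j₂ with h0 | h1
      · rw [h0, msup_self] at k3; exact k3
      · obtain ⟨u₀, hu₀0, hu₀j₂, hu₀e⟩ := exists_msup g (lo := 0) (hi := j₂) (by omega)
        rcases Nat.eq_zero_or_pos u₀ with hz | ho
        · rw [hz] at hu₀e; rw [← hu₀e]; exact k3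
        · exfalso
          have h2 : g u₀ ≤ msup g 1 J := le_msup ho (le_trans hu₀j₂ hj₂J)
          rw [← hu₀e] at h2
          linarith
    have hi₂1 : 1 ≤ i₂ := by
      rcases Nat.eq_zero_or_pos i₂ with h0 | h1
      · exfalso
        have h1 : g 1 ≤ msup g 1 J := le_msup le_rfl hJ1
        have h2 : minf g 0 j₁ ≤ g 1 := minf_le (by omega) hj₁1
        rw [h0, msup_self] at hG2
        linarith
      · exact h1
    have hB0μ : minf f 1 i₁ ≤ g 0 := by
      have h1 : f 1 ≤ msup f 0 i₂ := le_msup (by omega) hi₂1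
      have h2 : minf f 1 i₁ ≤ f 1 := minf_le le_rfl hi₁1
      linarith
    have hex : ∃ u, g u < minf f 1 i₁ := by
      obtain ⟨v₀, hv₀0, hv₀j₁, hv₀e⟩ := exists_minf g (lo := 0) (hi := j₁) (by omega)
      exact ⟨v₀, by rw [← hv₀e]; exact hQm1⟩
    set v := Nat.find hex with hvdef
    have hv : g v < minf f 1 i₁ := Nat.find_spec hex
    have hvj₁ : v ≤ j₁ := by
      obtain ⟨v₀, hv₀0, hv₀j₁, hv₀e⟩ := exists_minf g (lo := 0) (hi := j₁) (by omega)
      exact le_trans (Nat.find_min' hex (by rw [← hv₀e]; exact hQm1)) hv₀j₁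
    have hv1 : 1 ≤ v := by
      rcases Nat.eq_zero_or_pos v with h0 | h1
      · exfalso; rw [h0] at hv; linarith
      · exact h1
    have hQmv : minf f 1 i₁ ≤ minf g 0 (v-1) := by
      apply le_minf (by omega)
      intro u hu1 hu2
      exact not_lt.mp (Nat.find_min hex (by omega))
    have hc1 : msup f i₁ (n-1) ≤ msup g (v-1) (m-1) :=
      le_trans w1 (msup_mono (by omega) le_rfl (by omega))
    by_cases hc3 : msup f 1 i₁ ≤ msup g 0 (v-1)
    · -- γ-M2
      have hM2 : minf g (v-1) (m-1) < minf f i₁ (n-1) := by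
        by_contra hcc
        push_neg at hcc
        exact hFA' (v-1) (by omega) ⟨hc1, hcc, hc3, hQmv⟩
      obtain ⟨w, hwv, hwm, hwe⟩ := exists_minf g (lo := v-1) (hi := m-1) (by omega)
      have hwSm : g w < minf f i₁ (n-1) := by rw [← hwe]; exact hM2
      have hwj₁ : w < j₁ := by
        by_contra hc
        push_neg at hc
        have h : minf g j₁ (m-1) ≤ g w := minf_le hc hwm
        linarith
      have hf0w : f 0 ≤ g w :=
        le_trans hf0Qm (minf_le (by omega) (by omega))
      have hstrict : ∀ k, 1 ≤ k → k ≤ n-1 → f 0 < f k := by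
        intro k h1 h2
        rcases le_or_gt k i₁ with h | h
        · linarith [hμf k h1 h]
        · have h3 : minf f i₁ (n-1) ≤ f k := minf_le (by omega) h2
          linarith
      have hT3 : ∀ w', w' ≤ m-1 → f 0 ≤ g w' := by
        intro w' hw'
        by_contra hc
        push_neg at hc
        obtain ⟨js, hjsm, t1, t2, t3, t4⟩ := hAlg (n-1) (by omega)
        have hPm : f 0 ≤ minf f 0 (n-1) := by
          apply le_minf (by omega)
          intro k hk1 hk2
          rcases Nat.eq_zero_or_pos k with h0 | h1
          · exact le_of_eq (congrArg f h0.symm)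
          · exact le_of_lt (hstrict k h1 hk2)
        have hjsw' : js < w' := by
          by_contra hcc
          push_neg at hcc
          have h : minf g 0 js ≤ g w' := minf_le (by omega) hcc
          linarith
        rw [minf_self] at t2
        have h5 : minf g js (m-1) ≤ g w' := minf_le (by omega) hw'
        have hfn1 : f 0 < f (n-1) := hstrict (n-1) (by omega) le_rfl
        linarith
      have hminB : ∀ k, 1 ≤ k → k ≤ n-1 → minf g 0 (m-1) < f k := by
        intro k h1 h2
        rcases le_or_gt k i₁ with h | h
        · have h3 : minf g 0 (m-1) ≤ g v := minf_le (by omega) (by omega)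
          linarith [hμf k h1 h]
        · have h3 : minf f i₁ (n-1) ≤ f k := minf_le (by omega) h2
          have h4 : minf g 0 (m-1) ≤ g w := minf_le (by omega) hwm
          linarith
      obtain ⟨r, hr0, hri₂, hre⟩ := exists_msup f (lo := 0) (hi := i₂) (by omega)
      have hr1 : 1 ≤ r := by
        rcases Nat.eq_zero_or_pos r with h0 | h1
        · exfalso
          have h2 : f 1 ≤ msup f 0 i₂ := le_msup (by omega) hi₂1
          rw [hre, h0] at h2
          have := hstrict 1 le_rfl (by omega)
          linarith
        · exact h1
      obtain ⟨jr, hjrm, s1, s2, s3, s4⟩ := hAlg r (by omega : r < n)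
      obtain ⟨c, hcjr, hcm, hce⟩ := exists_msup g (lo := jr) (hi := m-1) (by omega)
      have hgc : msup f 0 i₂ ≤ g c := by
        rw [hre]
        calc f r ≤ msup f r (n-1) := le_msup le_rfl (by omega)
          _ ≤ msup g jr (m-1) := s1
          _ = g c := hce
      rcases Nat.eq_zero_or_pos c with hc0 | hcpos
    -- c = 0 → jr = 0
      · have hjr0 : jr = 0 := by omega
        rw [hjr0] at s2
        obtain ⟨ks, hks1, hks2, hkse⟩ := exists_minf f (lo := r) (hi := n-1) (by omega)
        have h6 := hminB ks (by omega) hks2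
        rw [hkse] at s2
        linarith
      · rcases le_or_gt c J with hcJ | hcJ
        · have h7 : g c ≤ msup g 1 J := le_msup hcpos hcJ
          linarith
        · apply hJmax c hcJ hcm
          refine ⟨hcpos, hcm, ?_, ?_⟩
          · calc msup f i₂ (n-1) ≤ msup f r (n-1) := msup_mono hri₂ le_rfl (by omega)
              _ ≤ msup g jr (m-1) := s1
              _ = g c := hce
              _ ≤ msup g c (m-1) := le_msup le_rfl hcm
          · apply le_minf hcpos
            intro w' hw'1 hw'2
            exact le_trans (minf_le le_rfl (by omega)) (hT3 w' (by omega))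
    · -- γ-M1
      have hM1 := not_le.mp hc3
      have hg0 : g 0 ≤ msup g 0 (v-1) := le_msup le_rfl (by omega)
      have hii : i₂ < i₁ := by
        by_contra hc
        push_neg at hc
        have h : msup f 1 i₁ ≤ msup f 0 i₂ := msup_mono (by omega) hc hi₁1
        linarith
      obtain ⟨u, hu0, huj₁, hue⟩ := exists_msup g (lo := 0) (hi := j₁) (by omega)
      have hgu : msup f 1 i₁ ≤ g u := by
        rw [← hue]; exact le_trans hM₁PM w3
      have hu1 : 1 ≤ u := by
        rcases Nat.eq_zero_or_pos u with h0 | h1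
        · exfalso; rw [h0] at hgu; linarith
        · exact h1
      have huJ : J < u := by
        by_contra hc
        push_neg at hc
        have h : g u ≤ msup g 1 J := le_msup hu1 hc
        linarith
      have hnPu := hJmax u huJ (by omega)
      by_cases hcc3 : msup f i₂ (n-1) ≤ msup g u (m-1)
      · have hcc4 : minf g 1 u < minf f 0 i₂ := by
          by_contra hcc
          push_neg at hcc
          exact hnPu ⟨hu1, by omega, hcc3, hcc⟩
        obtain ⟨w', hw'1, hw'u, hw'e⟩ := exists_minf g (lo := 1) (hi := u) hu1
        have h5 : minf g 0 j₁ ≤ g w' := minf_le (by omega) (le_trans hw'u huj₁)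
        have h6 : minf f 0 i₂ ≤ f 0 := minf_le le_rfl (by omega)
        rw [← hw'e] at h5
        linarith
      · have hTu := not_le.mp hcc3
        have hsplit : msup f i₂ (n-1) ≤ max (msup f 1 i₁) (msup f i₁ (n-1)) := by
          apply msup_le (by omega)
          intro k hk1 hk2
          rcases le_or_gt k i₁ with h | h
          · exact le_trans (le_msup (by omega) h) (le_max_left _ _)
          · exact le_trans (le_msup (by omega) hk2) (le_max_right _ _)
        have hguTu : g u ≤ msup g u (m-1) := le_msup le_rfl (by omega)
        have hSM12 : msup f i₂ (n-1) ≤ msup f i₁ (n-1) := by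
          rcases le_total (msup f 1 i₁) (msup f i₁ (n-1)) with h | h
          · rw [max_eq_right h] at hsplit; exact hsplit
          · rw [max_eq_left h] at hsplit; exfalso; linarith
        have h7 : msup g j₁ (m-1) ≤ msup g u (m-1) := msup_mono huj₁ le_rfl (by omega)
        linarith


theorem algF_head {f g : ℕ → ℝ} {n m : ℕ} (hn : 1 ≤ n) (hm : 1 ≤ m)
    (h : AlgF f n g m) : f 0 ≤ g 0 := by
  obtain ⟨j, hj, _, _, _, h4⟩ := h 0 hn
  rw [minf_self] at h4
  exact le_trans h4 (minf_le (by omega) (by omega))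

theorem algF_dropB_of_one {f g : ℕ → ℝ} {m : ℕ} (hm : 2 ≤ m) (h : AlgF f 1 g m) :
    AlgF f 1 (fun k => g (k + 1)) (m - 1) := by
  intro i hi
  have hi0 : i = 0 := by omega
  subst hi0
  obtain ⟨j₀, hj₀, c1, c2, c3, c4⟩ := h 0 (by omega)
  simp only [Nat.sub_self, msup_self, minf_self] at c1 c2 c3 c4
  have hall : ∀ u, u ≤ m - 1 → f 0 ≤ g u := by
    intro u hu
    rcases le_or_gt u j₀ with hle | hlt
    · exact le_trans c4 (minf_le (by omega) hle)
    · exact le_trans c2 (minf_le (by omega) hu)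
  refine ⟨0, by omega, ?_, ?_, ?_, ?_⟩
  · simp only [Nat.sub_self, msup_self]
    exact le_trans (hall 1 (by omega)) (le_msup (f := fun k => g (k+1)) (k := 0) le_rfl (by omega))
  · simp only [Nat.sub_self, minf_self]
    exact le_minf (by omega) (fun k hk1 hk2 => hall (k+1) (by omega))
  · rw [msup_self]
    exact le_trans (hall 1 (by omega)) (le_msup (f := fun k => g (k+1)) (k := 0) le_rfl le_rfl)
  · rw [minf_self]
    exact le_minf (by omega) (fun k hk1 hk2 => hall (k+1) (by omega))

theorem algF_dropA_of_one {f g : ℕ → ℝ} {n : ℕ} (hn : 2 ≤ n) (h : AlgF f n g 1) :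
    AlgF (fun k => f (k + 1)) (n - 1) g 1 := by
  intro i hi
  obtain ⟨j, hj, c1, c2, c3, c4⟩ := h (i + 1) (by omega)
  have hj0 : j = 0 := by omega
  subst hj0
  simp only [Nat.sub_self, msup_self, minf_self] at c1 c2 c3 c4
  refine ⟨0, by omega, ?_, ?_, ?_, ?_⟩
  · simp only [Nat.sub_self, msup_self]
    rw [msup_shift f (by omega), show n - 1 - 1 + 1 = n - 1 by omega]
    exact c1
  · simp only [Nat.sub_self, minf_self]
    rw [minf_shift f (by omega), show n - 1 - 1 + 1 = n - 1 by omega]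
    exact c2
  · rw [msup_self, msup_shift f (by omega), show (0:ℕ) + 1 = 1 from rfl]
    exact le_trans (msup_mono (by omega) le_rfl (by omega)) c3
  · rw [minf_self, minf_shift f (by omega), show (0:ℕ) + 1 = 1 from rfl]
    have h1 : minf f 1 (i + 1) ≤ msup f 1 (i + 1) := minf_le_msup (by omega)
    have h2 : msup f 1 (i + 1) ≤ msup f 0 (i + 1) := msup_mono (by omega) le_rfl (by omega)
    linarith

theorem ptrF_extendA {f g : ℕ → ℝ} {n m : ℕ} (hn : 2 ≤ n) (hm : 1 ≤ m) (h0 : f 0 ≤ g 0)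
    (h : PtrF (fun k => f (k + 1)) g (n - 1) m) : PtrF f g n m := by
  obtain ⟨a, b, ha0, hb0, haN, hbN, hstep, hval⟩ := h
  refine ⟨fun k => Nat.casesOn k 0 (fun k' => a k' + 1),
          fun k => Nat.casesOn k 0 (fun k' => b k'), rfl, rfl, ?_, ?_, ?_, ?_⟩
  · rw [show n + m - 2 = (n + m - 3) + 1 by omega]
    show a (n + m - 3) + 1 = n - 1
    rw [show n + m - 3 = n - 1 + m - 2 by omega, haN]
    omega
  · rw [show n + m - 2 = (n + m - 3) + 1 by omega]
    show b (n + m - 3) = m - 1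
    rw [show n + m - 3 = n - 1 + m - 2 by omega, hbN]
  · intro k hk
    cases k with
    | zero =>
      left
      constructor
      · show a 0 + 1 = 0 + 1
        rw [ha0]
      · show b 0 = 0
        exact hb0
    | succ k' =>
      rcases hstep k' (by omega) with ⟨h1, h2⟩ | ⟨h1, h2⟩
      · left
        exact ⟨by show a (k'+1) + 1 = a k' + 1 + 1; rw [h1], by show b (k'+1) = b k'; rw [h2]⟩
      · right
        exact ⟨by show a (k'+1) + 1 = a k' + 1; rw [h1], by show b (k'+1) = b k' + 1; rw [h2]⟩
  · intro k hk
    cases k with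
    | zero => exact ⟨by show (0:ℕ) < n; omega, by show (0:ℕ) < m; omega, by show f 0 ≤ g 0; exact h0⟩
    | succ k' =>
      obtain ⟨ha', hb', hfg'⟩ := hval k' (by omega)
      exact ⟨by show a k' + 1 < n; omega, hb', hfg'⟩

theorem ptrF_extendB {f g : ℕ → ℝ} {n m : ℕ} (hn : 1 ≤ n) (hm : 2 ≤ m) (h0 : f 0 ≤ g 0)
    (h : PtrF f (fun k => g (k + 1)) n (m - 1)) : PtrF f g n m := by
  obtain ⟨a, b, ha0, hb0, haN, hbN, hstep, hval⟩ := h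
  refine ⟨fun k => Nat.casesOn k 0 (fun k' => a k'),
          fun k => Nat.casesOn k 0 (fun k' => b k' + 1), rfl, rfl, ?_, ?_, ?_, ?_⟩
  · rw [show n + m - 2 = (n + m - 3) + 1 by omega]
    show a (n + m - 3) = n - 1
    rw [show n + m - 3 = n + (m - 1) - 2 by omega, haN]
  · rw [show n + m - 2 = (n + m - 3) + 1 by omega]
    show b (n + m - 3) + 1 = m - 1
    rw [show n + m - 3 = n + (m - 1) - 2 by omega, hbN]
    omega
  · intro k hk
    cases k with
    | zero =>
      right
      constructor
      · show a 0 = 0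
        exact ha0
      · show b 0 + 1 = 0 + 1
        rw [hb0]
    | succ k' =>
      rcases hstep k' (by omega) with ⟨h1, h2⟩ | ⟨h1, h2⟩
      · left
        exact ⟨by show a (k'+1) = a k' + 1; rw [h1], by show b (k'+1) + 1 = b k' + 1; rw [h2]⟩
      · right
        exact ⟨by show a (k'+1) = a k'; rw [h1], by show b (k'+1) + 1 = b k' + 1 + 1; rw [h2]⟩
  · intro k hk
    cases k with
    | zero => exact ⟨by show (0:ℕ) < n; omega, by show (0:ℕ) < m; omega, by show f 0 ≤ g 0; exact h0⟩
    | succ k' =>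
      obtain ⟨ha', hb', hfg'⟩ := hval k' (by omega)
      exact ⟨ha', by show b k' + 1 < m; omega, hfg'⟩

theorem algF_to_ptrF : ∀ N (f g : ℕ → ℝ) (n m : ℕ), n + m ≤ N → 1 ≤ n → 1 ≤ m →
    AlgF f n g m → PtrF f g n m := by
  intro N
  induction N with
  | zero => intro f g n m h hn hm _; omega
  | succ N ih =>
    intro f g n m hN hn hm hAlg
    have h00 : f 0 ≤ g 0 := algF_head hn hm hAlg
    rcases Nat.lt_or_ge n 2 with hn2 | hn2
    · rcases Nat.lt_or_ge m 2 with hm2 | hm2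
      · have hn1 : n = 1 := by omega
        have hm1 : m = 1 := by omega
        subst hn1; subst hm1
        refine ⟨fun _ => 0, fun _ => 0, rfl, rfl, rfl, rfl, ?_, ?_⟩
        · intro k hk; omega
        · intro k hk
          exact ⟨by show (0:ℕ) < 1; omega, by show (0:ℕ) < 1; omega,
            by show f 0 ≤ g 0; exact h00⟩
      · have hn1 : n = 1 := by omega
        subst hn1
        have hd := algF_dropB_of_one hm2 hAlg
        have hp := ih f (fun k => g (k+1)) 1 (m-1) (by omega) le_rfl (by omega) hd
        exact ptrF_extendB le_rfl hm2 h00 hp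
    · rcases Nat.lt_or_ge m 2 with hm2 | hm2
      · have hm1 : m = 1 := by omega
        subst hm1
        have hd := algF_dropA_of_one hn2 hAlg
        have hp := ih (fun k => f (k+1)) g (n-1) 1 (by omega) (by omega) le_rfl hd
        exact ptrF_extendA hn2 le_rfl h00 hp
      · by_cases hd : AlgF (fun k => f (k + 1)) (n - 1) g m
        · exact ptrF_extendA hn2 (by omega) h00
            (ih (fun k => f (k+1)) g (n-1) m (by omega) (by omega) (by omega) hd)
        · have hd2 : AlgF f n (fun k => g (k + 1)) (m - 1) := by
            by_contra hd2
            exact key hn2 hm2 hAlg hd hd2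
          exact ptrF_extendB (by omega) hm2 h00
            (ih f (fun k => g (k+1)) n (m-1) (by omega) (by omega) (by omega) hd2)

theorem exists_greatest {P : ℕ → Prop} (N : ℕ) (h : ∃ k, k ≤ N ∧ P k) :
    ∃ K, K ≤ N ∧ P K ∧ ∀ k, K < k → k ≤ N → ¬ P k := by
  classical
  obtain ⟨k₀, hk₀, hp⟩ := h
  exact ⟨Nat.findGreatest P N, Nat.findGreatest_le N, Nat.findGreatest_spec hk₀ hp,
    fun k h1 h2 => Nat.findGreatest_is_greatest h1 h2⟩

theorem ptrF_to_algF {f g : ℕ → ℝ} {n m : ℕ} (hn : 1 ≤ n) (hm : 1 ≤ m)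
    (h : PtrF f g n m) : AlgF f n g m := by
  classical
  obtain ⟨a, b, ha0, hb0, haN, hbN, hstep, hval⟩ := h
  set N := n + m - 2 with hNdef
  have amono : ∀ k' ≤ N, ∀ k ≤ k', a k ≤ a k' := by
    intro k'
    induction k' with
    | zero => intro _ k hk; exact le_of_eq (congrArg a (by omega))
    | succ k' ihk =>
      intro hk' k hk
      rcases Nat.eq_or_lt_of_le hk with he | hl
      · exact le_of_eq (congrArg a he)
      · have h1 : a k ≤ a k' := ihk (by omega) k (by omega)
        rcases hstep k' (by omega) with ⟨h2, _⟩ | ⟨h2, _⟩ <;> omega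
  have bmono : ∀ k' ≤ N, ∀ k ≤ k', b k ≤ b k' := by
    intro k'
    induction k' with
    | zero => intro _ k hk; exact le_of_eq (congrArg b (by omega))
    | succ k' ihk =>
      intro hk' k hk
      rcases Nat.eq_or_lt_of_le hk with he | hl
      · exact le_of_eq (congrArg b he)
      · have h1 : b k ≤ b k' := ihk (by omega) k (by omega)
        rcases hstep k' (by omega) with ⟨_, h2⟩ | ⟨_, h2⟩ <;> omega
  have aIVT : ∀ i, i ≤ n - 1 → ∃ k, k ≤ N ∧ a k = i := by
    intro i hi
    obtain ⟨K, hKN, hKp, hKmax⟩ := exists_greatest (P := fun k => a k ≤ i) N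
      ⟨0, Nat.zero_le N, by show a 0 ≤ i; rw [ha0]; omega⟩
    rcases Nat.eq_or_lt_of_le hKN with he | hl
    · refine ⟨K, hKN, ?_⟩
      have h1 : a K = n - 1 := by rw [he, haN]
      omega
    · have hgt : ¬ (a (K+1) ≤ i) := hKmax (K+1) (by omega) (by omega)
      rcases hstep K (by omega) with ⟨h2, _⟩ | ⟨h2, _⟩
      · exact ⟨K, by omega, by omega⟩
      · omega
  have bIVT : ∀ j, j ≤ m - 1 → ∃ k, k ≤ N ∧ b k = j := by
    intro j hj
    obtain ⟨K, hKN, hKp, hKmax⟩ := exists_greatest (P := fun k => b k ≤ j) N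
      ⟨0, Nat.zero_le N, by show b 0 ≤ j; rw [hb0]; omega⟩
    rcases Nat.eq_or_lt_of_le hKN with he | hl
    · refine ⟨K, hKN, ?_⟩
      have h1 : b K = m - 1 := by rw [he, hbN]
      omega
    · have hgt : ¬ (b (K+1) ≤ j) := hKmax (K+1) (by omega) (by omega)
      rcases hstep K (by omega) with ⟨_, h2⟩ | ⟨_, h2⟩
      · omega
      · exact ⟨K, by omega, by omega⟩
  intro i hi
  obtain ⟨K, hKN, hKp, hKmax⟩ := exists_greatest (P := fun k => a k = i) N (aIVT i (by omega))
  obtain ⟨han, hbm, hfg⟩ := hval K hKN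
  refine ⟨b K, hbm, ?_, ?_, ?_, ?_⟩
  · -- suffix max
    apply msup_le (by omega)
    intro i' h1 h2
    obtain ⟨K', hK'N, hK'p, hK'max⟩ := exists_greatest (P := fun k => a k = i') N (aIVT i' h2)
    have hKK' : K ≤ K' := by
      by_contra hcon
      push_neg at hcon
      rcases Nat.eq_or_lt_of_le h1 with he | hl
      · exact hK'max K hcon hKN (by rw [hKp]; exact he)
      · have := amono K hKN K' (le_of_lt hcon)
        omega
    obtain ⟨_, hbm', hfg'⟩ := hval K' hK'N
    rw [hK'p] at hfg'
    exact le_trans hfg' (le_msup (bmono K' hK'N K hKK') (by omega))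
  · -- suffix min
    apply le_minf (by omega)
    intro j' h1 h2
    rcases Nat.eq_or_lt_of_le h1 with he | hl
    · have h3 : minf f i (n-1) ≤ f i := minf_le le_rfl (by omega)
      rw [hKp] at hfg
      rw [← he]
      linarith
    · obtain ⟨K'', hN'', hp, hK''max⟩ := exists_greatest (P := fun k => b k = j') N (bIVT j' h2)
      have hKK'' : K ≤ K'' := by
        by_contra hcon
        push_neg at hcon
        have := bmono K hKN K'' (le_of_lt hcon)
        omega
      have haK'' : i ≤ a K'' := by rw [← hKp]; exact amono K'' hN'' K hKK''
      obtain ⟨han'', _, hfg''⟩ := hval K'' hN''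
      have h3 : minf f i (n-1) ≤ f (a K'') := minf_le haK'' (by omega)
      rw [hp] at hfg''
      linarith
  · -- prefix max
    apply msup_le (by omega)
    intro i' h1 h2
    obtain ⟨K', hK'N, hK'p, hK'max⟩ := exists_greatest (P := fun k => a k = i') N (aIVT i' (by omega))
    have hKK' : K' ≤ K := by
      by_contra hcon
      push_neg at hcon
      rcases Nat.eq_or_lt_of_le h2 with he | hl
      · exact hKmax K' hcon hK'N (by rw [hK'p]; exact he)
      · have := amono K' hK'N K (le_of_lt hcon)
        omega
    obtain ⟨_, _, hfg'⟩ := hval K' hK'N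
    rw [hK'p] at hfg'
    exact le_trans hfg' (le_msup (by omega) (bmono K hKN K' hKK'))
  · -- prefix min
    apply le_minf (by omega)
    intro j' h1 h2
    rcases Nat.eq_or_lt_of_le h2 with he | hl
    · have h3 : minf f 0 i ≤ f i := minf_le (by omega) le_rfl
      rw [hKp] at hfg
      rw [he]
      linarith
    · obtain ⟨K'', hN'', hp, hK''max⟩ := exists_greatest (P := fun k => b k = j') N (bIVT j' (by omega))
      have hKK'' : K'' ≤ K := by
        by_contra hcon
        push_neg at hcon
        have := bmono K'' hN'' K (le_of_lt hcon)
        omega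
      have h3 : minf f 0 i ≤ f (a K'') := minf_le (by omega) (by rw [← hKp]; exact amono K hKN K'' hKK'')
      obtain ⟨_, _, hfg''⟩ := hval K'' hN''
      rw [hp] at hfg''
      linarith

theorem msup_eq_Ico {f : ℕ → ℝ} {i n : ℕ} (h : i < n)
    (hne : (Finset.Ico i n).Nonempty) :
    msup f i (n - 1) = (Finset.Ico i n).sup' hne f := by
  rw [msup, dif_pos (by omega : i ≤ n - 1)]
  apply Finset.sup'_congr
  · rw [← Finset.Ico_add_one_right_eq_Icc]
    congr 1
    omega
  · intro x _; rfl

theorem minf_eq_Ico {f : ℕ → ℝ} {i n : ℕ} (h : i < n)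
    (hne : (Finset.Ico i n).Nonempty) :
    minf f i (n - 1) = (Finset.Ico i n).inf' hne f := by
  rw [minf, dif_pos (by omega : i ≤ n - 1)]
  apply Finset.inf'_congr
  · rw [← Finset.Ico_add_one_right_eq_Icc]
    congr 1
    omega
  · intro x _; rfl

theorem msup_eq_Iic {f : ℕ → ℝ} {i : ℕ} (hne : (Finset.Iic i).Nonempty) :
    msup f 0 i = (Finset.Iic i).sup' hne f := by
  rw [msup, dif_pos (Nat.zero_le i)]
  apply Finset.sup'_congr
  · ext k; simp
  · intro x _; rfl

theorem minf_eq_Iic {f : ℕ → ℝ} {i : ℕ} (hne : (Finset.Iic i).Nonempty) :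
    minf f 0 i = (Finset.Iic i).inf' hne f := by
  rw [minf, dif_pos (Nat.zero_le i)]
  apply Finset.inf'_congr
  · ext k; simp
  · intro x _; rfl

end PtrAlg

open PtrAlg in
theorem algDom_iff_algF (A B : List ℝ) :
    AlgDom A B ↔ AlgF (fun k => A.getD k 0) A.length (fun k => B.getD k 0) B.length := by
  constructor
  · intro h i hi
    obtain ⟨j, hj, c1, c2, c3, c4⟩ := h i hi
    refine ⟨j, hj, ?_, ?_, ?_, ?_⟩
    · rw [msup_eq_Ico hi ⟨i, Finset.mem_Ico.mpr ⟨le_rfl, hi⟩⟩,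
        msup_eq_Ico hj ⟨j, Finset.mem_Ico.mpr ⟨le_rfl, hj⟩⟩]
      exact c1
    · rw [minf_eq_Ico hi ⟨i, Finset.mem_Ico.mpr ⟨le_rfl, hi⟩⟩,
        minf_eq_Ico hj ⟨j, Finset.mem_Ico.mpr ⟨le_rfl, hj⟩⟩]
      exact c2
    · rw [msup_eq_Iic (Finset.nonempty_Iic), msup_eq_Iic (Finset.nonempty_Iic)]
      exact c3
    · rw [minf_eq_Iic (Finset.nonempty_Iic), minf_eq_Iic (Finset.nonempty_Iic)]
      exact c4
  · intro h i hi
    obtain ⟨j, hj, c1, c2, c3, c4⟩ := h i hi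
    refine ⟨j, hj, ?_, ?_, ?_, ?_⟩
    · rw [← msup_eq_Ico hi ⟨i, Finset.mem_Ico.mpr ⟨le_rfl, hi⟩⟩,
        ← msup_eq_Ico hj ⟨j, Finset.mem_Ico.mpr ⟨le_rfl, hj⟩⟩]
      exact c1
    · rw [← minf_eq_Ico hi ⟨i, Finset.mem_Ico.mpr ⟨le_rfl, hi⟩⟩,
        ← minf_eq_Ico hj ⟨j, Finset.mem_Ico.mpr ⟨le_rfl, hj⟩⟩]
      exact c2
    · rw [← msup_eq_Iic (Finset.nonempty_Iic), ← msup_eq_Iic (Finset.nonempty_Iic)]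
      exact c3
    · rw [← minf_eq_Iic (Finset.nonempty_Iic), ← minf_eq_Iic (Finset.nonempty_Iic)]
      exact c4

open PtrAlg in
theorem ptrDom_iff_ptrF (A B : List ℝ) :
    PtrDom A B ↔ PtrF (fun k => A.getD k 0) (fun k => B.getD k 0) A.length B.length :=
  Iff.rfl

/-- The pointer-advancement and algebraic definitions of dominance are
equivalent for nonempty finite sequences. -/
theorem ptrDom_iff_algDom (A B : List ℝ) (hA : A ≠ []) (hB : B ≠ []) :
    PtrDom A B ↔ AlgDom A B := by
  have hn : 1 ≤ A.length := List.length_pos_iff.mpr hA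
  have hm : 1 ≤ B.length := List.length_pos_iff.mpr hB
  rw [ptrDom_iff_ptrF, algDom_iff_algF]
  constructor
  · intro h
    exact PtrAlg.ptrF_to_algF hn hm h
  · intro h
    exact PtrAlg.algF_to_ptrF (A.length + B.length) _ _ _ _ le_rfl hn hm h
end

section
/- If σ and τ are both partial schedules of a DAG G, then σ ∪· τ (σ followed by the nodes of τ not appearing in σ, in τ's order) is also a valid partial schedule of G. -/
/-- `S` is a topological cut: no edge from the complement into `S`. -/
def IsTopCut {V : Type*} (E : V → V → Prop) (S : Set V) : Prop :=
  ∀ u v, E u v → v ∈ S → u ∈ S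

/-- A partial schedule: a duplicate-free sequence of nodes all of whose
prefix sets are topological cuts. -/
def IsPartialSchedule {V : Type*} (E : V → V → Prop) (σ : List V) : Prop :=
  σ.Nodup ∧ ∀ i, IsTopCut E {v | v ∈ σ.take i}

private lemma mem_take_iff_indexOf {V : Type*} [DecidableEq V] {l : List V} {v : V}
    (hv : v ∈ l) (i : ℕ) : v ∈ l.take i ↔ l.idxOf v < i := by
  constructor
  · intro h
    have h1 : l.idxOf v = (l.take i).idxOf v := by
      conv_lhs => rw [← List.take_append_drop i l]
      exact List.idxOf_append_of_mem h
    have h2 : (l.take i).idxOf v < (l.take i).length := List.idxOf_lt_length_iff.2 h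
    have := h2.trans_le (List.length_take_le i l)
    omega
  · intro h
    have hlen : l.idxOf v < l.length := List.idxOf_lt_length_iff.2 hv
    have hlen' : l.idxOf v < (l.take i).length := by
      simp [List.length_take]; omega
    have : (l.take i)[l.idxOf v] = v := by
      rw [List.getElem_take]; exact List.getElem_idxOf hlen
    exact this ▸ List.getElem_mem hlen'

private lemma sublist_pair_indexOf {V : Type*} [DecidableEq V] {l : List V} {u v : V}
    (hn : l.Nodup) (h : List.Sublist [u, v] l) : l.idxOf u < l.idxOf v := by
  induction l with
  | nil => simp at h
  | cons a t ih =>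
    rw [List.nodup_cons] at hn
    obtain ⟨ha, hnt⟩ := hn
    cases h with
    | cons _ h' =>
      have hu : u ∈ t := h'.subset (by simp)
      have hv : v ∈ t := h'.subset (by simp)
      rw [List.idxOf_cons_ne _ (fun e => by subst e; exact ha hu),
        List.idxOf_cons_ne _ (fun e => by subst e; exact ha hv)]
      exact Nat.succ_lt_succ (ih hnt h')
    | cons_cons _ h' =>
      have hv : v ∈ t := h'.subset (by simp)
      rw [List.idxOf_cons_self, List.idxOf_cons_ne _ (fun e => by subst e; exact ha hv)]
      exact Nat.succ_pos _

/-- characterization of the prefix-cut condition for nodup lists -/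
private lemma cuts_iff {V : Type*} [DecidableEq V] {E : V → V → Prop}
    (hedge : ∀ u v, E u v → u ≠ v) {l : List V} (hn : l.Nodup) :
    (∀ i, IsTopCut E {v | v ∈ l.take i}) ↔
      ∀ u v, E u v → v ∈ l → u ∈ l ∧ l.idxOf u < l.idxOf v := by
  constructor
  · intro h u v huv hv
    have hu : u ∈ l.take (l.idxOf v + 1) := by
      apply h (l.idxOf v + 1) u v huv
      simp only [Set.mem_setOf_eq]
      exact (mem_take_iff_indexOf hv _).2 (Nat.lt_succ_self _)
    have hul : u ∈ l := (List.take_subset _ _) hu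
    have := (mem_take_iff_indexOf hul _).1 hu
    have hne : l.idxOf u ≠ l.idxOf v := fun e =>
      hedge u v huv ((List.idxOf_inj hul).1 e)
    refine ⟨hul, ?_⟩; omega
  · intro h i u v huv hv
    simp only [Set.mem_setOf_eq] at *
    have hvl : v ∈ l := (List.take_subset _ _) hv
    obtain ⟨hul, hlt⟩ := h u v huv hvl
    exact (mem_take_iff_indexOf hul _).2 (hlt.trans ((mem_take_iff_indexOf hvl _).1 hv))

private lemma pair_sublist_of_indexOf {V : Type*} [DecidableEq V] {l : List V} {u v : V}
    (hu : u ∈ l) (hv : v ∈ l) (h : l.idxOf u < l.idxOf v) : List.Sublist [u, v] l := by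
  have hvlen : l.idxOf v < l.length := List.idxOf_lt_length_iff.2 hv
  have hdecomp : l = l.take (l.idxOf v) ++ v :: l.drop (l.idxOf v + 1) := by
    conv_lhs => rw [← List.take_append_drop (l.idxOf v) l]
    congr 1
    rw [List.drop_eq_getElem_cons hvlen, List.getElem_idxOf hvlen]
  have hu' : u ∈ l.take (l.idxOf v) := (mem_take_iff_indexOf hu _).2 h
  rw [hdecomp]
  have h1 : List.Sublist [u] <| l.take (l.idxOf v) := List.singleton_sublist.2 hu'
  have h2 : List.Sublist [v] <| v :: l.drop (l.idxOf v + 1) := by simp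
  exact h1.append h2

/-- If `σ` and `τ` are partial schedules, then `σ ∪· τ`, i.e. `σ` followed by
the nodes of `τ` not appearing in `σ` in `τ`'s order, is a valid partial
schedule. -/
theorem partialSchedule_union {V : Type*} [DecidableEq V] (E : V → V → Prop)
    (hacyc : ∀ v, ¬ Relation.TransGen E v v)
    (σ τ : List V) (hσ : IsPartialSchedule E σ) (hτ : IsPartialSchedule E τ) :
    IsPartialSchedule E (σ ++ τ.filter (fun v => decide (v ∉ σ))) := by
  have hedge : ∀ u v, E u v → u ≠ v := by
    rintro u v huv rfl; exact hacyc u (Relation.TransGen.single huv)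
  obtain ⟨hσn, hσc⟩ := hσ
  obtain ⟨hτn, hτc⟩ := hτ
  set F := τ.filter (fun v => decide (v ∉ σ)) with hF
  have hFn : F.Nodup := hτn.filter _
  have hFmem : ∀ {x}, x ∈ F → x ∈ τ ∧ x ∉ σ := by
    intro x hx
    have := List.mem_filter.1 hx
    simpa using this
  have hnodup : (σ ++ F).Nodup := by
    rw [List.nodup_append]
    exact ⟨hσn, hFn, fun a ha b hb e => (hFmem hb).2 (e ▸ ha)⟩
  refine ⟨hnodup, ?_⟩
  rw [cuts_iff hedge hnodup]
  intro u v huv hv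
  rcases List.mem_append.1 hv with hvσ | hvF
  · -- v ∈ σ
    obtain ⟨huσ, hlt⟩ := ((cuts_iff hedge hσn).1 hσc) u v huv hvσ
    refine ⟨List.mem_append_left _ huσ, ?_⟩
    rw [List.idxOf_append_of_mem huσ, List.idxOf_append_of_mem hvσ]
    exact hlt
  · -- v ∈ F
    obtain ⟨hvτ, hvs⟩ := hFmem hvF
    obtain ⟨huτ, hltτ⟩ := ((cuts_iff hedge hτn).1 hτc) u v huv hvτ
    rw [List.idxOf_append_of_notMem hvs]
    by_cases huσ : u ∈ σ
    · refine ⟨List.mem_append_left _ huσ, ?_⟩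
      rw [List.idxOf_append_of_mem huσ]
      have : σ.idxOf u < σ.length := List.idxOf_lt_length_iff.2 huσ
      omega
    · have huF : u ∈ F := List.mem_filter.2 ⟨huτ, by simpa using huσ⟩
      refine ⟨List.mem_append_right _ huF, ?_⟩
      rw [List.idxOf_append_of_notMem huσ]
      have hsub : List.Sublist [u, v] τ := pair_sublist_of_indexOf huτ hvτ hltτ
      have hpair : [u, v].filter (fun v => decide (v ∉ σ)) = [u, v] := by
        simp [huσ, hvs]
      have hsubF : List.Sublist [u, v] F := hF ▸ hpair ▸ hsub.filter _
      have := sublist_pair_indexOf hFn hsubF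
      omega
end

section
/- A minimum topological cut can be 'passed through' without loss: let τ be any schedule for a node-weighted DAG G, S a topological cut of G of minimum total weight, and σ the subsequence of τ consisting of the nodes of S. Then the schedule σ ∪· τ (σ followed by the remaining nodes of τ in their τ-order) is a valid schedule of G and its memory profile dominates that of τ. -/
/-- A schedule: a duplicate-free enumeration of all nodes, all of whose
prefix sets are topological cuts. -/
def IsSchedule {V : Type*} (E : V → V → Prop) (σ : List V) : Prop :=
  σ.Nodup ∧ (∀ v : V, v ∈ σ) ∧ ∀ i, IsTopCut E {v | v ∈ σ.take i}

/-- Node-sum memory profile: prefix sums of node weights. -/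
def memProfile {V : Type*} (w : V → ℝ) (σ : List V) : List ℝ :=
  (List.range (σ.length + 1)).map fun i => ((σ.take i).map w).sum

/-! ### Auxiliary lemmas -/

section PtrDomLemmas

lemma ptrDom_single (x y : ℝ) (h : x ≤ y) : PtrDom [x] [y] := by
  refine ⟨fun _ => 0, fun _ => 0, rfl, rfl, rfl, rfl, ?_, ?_⟩
  · intro k hk; simp at hk
  · intro k hk
    simp only [List.length_singleton] at hk
    have : k = 0 := by omega
    subst this
    exact ⟨by simp, by simp, by simpa using h⟩

lemma ptrDom_concat_left {A B : List ℝ} (hA : A ≠ []) (hB : B ≠ [])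
    (h : PtrDom A B) (x : ℝ) (hx : x ≤ B.getD (B.length - 1) 0) :
    PtrDom (A ++ [x]) B := by
  obtain ⟨a, b, ha0, hb0, haL, hbL, hstep, hineq⟩ := h
  have hA1 : 1 ≤ A.length := List.length_pos_iff.mpr hA
  have hB1 : 1 ≤ B.length := List.length_pos_iff.mpr hB
  set L := A.length + B.length - 2 with hL
  have hlen : (A ++ [x]).length = A.length + 1 := by simp
  have hL' : (A ++ [x]).length + B.length - 2 = L + 1 := by rw [hlen]; omega
  refine ⟨fun k => if k ≤ L then a k else A.length,
          fun k => if k ≤ L then b k else B.length - 1, ?_, ?_, ?_, ?_, ?_, ?_⟩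
  · simpa using ha0
  · simpa using hb0
  · rw [hL']; simp
  · rw [hL']; simp
  · intro k hk
    rw [hL'] at hk
    by_cases h1 : k + 1 ≤ L
    · have h2 : k ≤ L := by omega
      simp only [if_pos h1, if_pos h2]
      exact hstep k h1
    · have h2 : k = L := by omega
      subst h2
      simp only [if_pos le_rfl, if_neg (by omega : ¬ L + 1 ≤ L)]
      left; constructor
      · rw [haL]; omega
      · rw [hbL]
  · intro k hk
    rw [hL'] at hk
    by_cases h2 : k ≤ L
    · simp only [if_pos h2]
      obtain ⟨h3, h4, h5⟩ := hineq k h2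
      refine ⟨by rw [hlen]; omega, h4, ?_⟩
      rwa [List.getD_append _ _ _ _ h3]
    · simp only [if_neg h2]
      refine ⟨by rw [hlen]; omega, by omega, ?_⟩
      rw [show (A ++ [x]).getD A.length 0 = x by simp]
      exact hx

lemma ptrDom_concat_right {A B : List ℝ} (hA : A ≠ []) (hB : B ≠ [])
    (h : PtrDom A B) (y : ℝ) (hy : A.getD (A.length - 1) 0 ≤ y) :
    PtrDom A (B ++ [y]) := by
  obtain ⟨a, b, ha0, hb0, haL, hbL, hstep, hineq⟩ := h
  have hA1 : 1 ≤ A.length := List.length_pos_iff.mpr hA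
  have hB1 : 1 ≤ B.length := List.length_pos_iff.mpr hB
  set L := A.length + B.length - 2 with hL
  have hlen : (B ++ [y]).length = B.length + 1 := by simp
  have hL' : A.length + (B ++ [y]).length - 2 = L + 1 := by rw [hlen]; omega
  refine ⟨fun k => if k ≤ L then a k else A.length - 1,
          fun k => if k ≤ L then b k else B.length, ?_, ?_, ?_, ?_, ?_, ?_⟩
  · simpa using ha0
  · simpa using hb0
  · rw [hL']; simp
  · rw [hL']; simp [hlen]
  · intro k hk
    rw [hL'] at hk
    by_cases h1 : k + 1 ≤ L
    · have h2 : k ≤ L := by omega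
      simp only [if_pos h1, if_pos h2]
      exact hstep k h1
    · have h2 : k = L := by omega
      subst h2
      simp only [if_pos le_rfl, if_neg (by omega : ¬ L + 1 ≤ L)]
      right; constructor
      · rw [haL]
      · rw [hbL]; omega
  · intro k hk
    rw [hL'] at hk
    by_cases h2 : k ≤ L
    · simp only [if_pos h2]
      obtain ⟨h3, h4, h5⟩ := hineq k h2
      refine ⟨h3, by rw [hlen]; omega, ?_⟩
      rwa [List.getD_append _ _ _ _ h4]
    · simp only [if_neg h2]
      refine ⟨by omega, by rw [hlen]; omega, ?_⟩
      rw [show (B ++ [y]).getD B.length 0 = y by simp]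
      exact hy

lemma getD_take' (l : List ℝ) {i m : ℕ} (h : i < m) :
    (l.take m).getD i 0 = l.getD i 0 := by
  by_cases h2 : i < l.length
  · have h3 : i < (l.take m).length := by rw [List.length_take]; omega
    rw [List.getD_eq_getElem _ _ h3, List.getD_eq_getElem _ _ h2]
    exact List.getElem_take
  · rw [List.getD_eq_default _ _ (by rw [List.length_take]; omega),
        List.getD_eq_default _ _ (by omega)]

lemma take_succ_getD (l : List ℝ) (i : ℕ) (h : i < l.length) :
    l.take (i + 1) = l.take i ++ [l.getD i 0] := by
  rw [List.take_succ, List.getElem?_eq_getElem h, List.getD_eq_getElem _ _ h]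
  rfl

lemma ptrDom_extend_left {A B : List ℝ} {i j : ℕ} (hiA : i + 1 < A.length)
    (hjB : j < B.length)
    (h : PtrDom (A.take (i + 1)) (B.take (j + 1)))
    (hle : A.getD (i + 1) 0 ≤ B.getD j 0) :
    PtrDom (A.take (i + 1 + 1)) (B.take (j + 1)) := by
  have hAne : A.take (i + 1) ≠ [] := by
    apply List.ne_nil_of_length_pos; rw [List.length_take]; omega
  have hBne : B.take (j + 1) ≠ [] := by
    apply List.ne_nil_of_length_pos; rw [List.length_take]; omega
  have hlast : (B.take (j + 1)).getD ((B.take (j + 1)).length - 1) 0 = B.getD j 0 := by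
    rw [List.length_take, show min (j + 1) B.length - 1 = j by omega]
    exact getD_take' B (by omega)
  have h2 := ptrDom_concat_left hAne hBne h (A.getD (i + 1) 0) (by rw [hlast]; exact hle)
  rwa [← take_succ_getD A (i + 1) hiA] at h2

lemma ptrDom_extend_right {A B : List ℝ} {i j : ℕ} (hiA : i < A.length)
    (hjB : j + 1 < B.length)
    (h : PtrDom (A.take (i + 1)) (B.take (j + 1)))
    (hle : A.getD i 0 ≤ B.getD (j + 1) 0) :
    PtrDom (A.take (i + 1)) (B.take (j + 1 + 1)) := by
  have hAne : A.take (i + 1) ≠ [] := by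
    apply List.ne_nil_of_length_pos; rw [List.length_take]; omega
  have hBne : B.take (j + 1) ≠ [] := by
    apply List.ne_nil_of_length_pos; rw [List.length_take]; omega
  have hlast : (A.take (i + 1)).getD ((A.take (i + 1)).length - 1) 0 = A.getD i 0 := by
    rw [List.length_take, show min (i + 1) A.length - 1 = i by omega]
    exact getD_take' A (by omega)
  have h2 := ptrDom_concat_right hAne hBne h (B.getD (j + 1) 0) (by rw [hlast]; exact hle)
  rwa [← take_succ_getD B (j + 1) hjB] at h2

end PtrDomLemmas

lemma memProfile_length {V : Type*} (w : V → ℝ) (l : List V) :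
    (memProfile w l).length = l.length + 1 := by simp [memProfile]

lemma memProfile_getD {V : Type*} (w : V → ℝ) (l : List V) (i : ℕ) (h : i ≤ l.length) :
    (memProfile w l).getD i 0 = ((l.take i).map w).sum := by
  have h1 : i < (memProfile w l).length := by rw [memProfile_length]; omega
  rw [List.getD_eq_getElem _ _ h1]
  simp [memProfile]

lemma nat_ivt {f : ℕ → ℕ} (h0 : f 0 = 0) (hstep : ∀ k, f (k + 1) ≤ f k + 1)
    {m i : ℕ} (hi : i ≤ f m) : ∃ j ≤ m, f j = i := by
  induction m with
  | zero => exact ⟨0, le_rfl, by omega⟩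
  | succ m ih =>
    by_cases h : i ≤ f m
    · obtain ⟨j, hj, hji⟩ := ih h
      exact ⟨j, by omega, hji⟩
    · have := hstep m
      exact ⟨m + 1, le_rfl, by omega⟩

lemma isTopCut_union {V : Type*} {E : V → V → Prop} {S T : Set V}
    (hS : IsTopCut E S) (hT : IsTopCut E T) : IsTopCut E (S ∪ T) := by
  rintro u v h (hv | hv)
  · exact Or.inl (hS u v h hv)
  · exact Or.inr (hT u v h hv)

lemma isTopCut_inter {V : Type*} {E : V → V → Prop} {S T : Set V}
    (hS : IsTopCut E S) (hT : IsTopCut E T) : IsTopCut E (S ∩ T) := by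
  rintro u v h ⟨hv1, hv2⟩
  exact ⟨hS u v h hv1, hT u v h hv2⟩

section Aux
variable {V : Type*} [DecidableEq V] (S : Finset V) (w : V → ℝ) (τ : List V)

def cF (j : ℕ) : ℕ := ((τ.take j).filter (fun v => decide (v ∈ S))).length
def dF (j : ℕ) : ℕ := ((τ.take j).filter (fun v => decide (v ∉ S))).length
def GF (j : ℕ) : ℝ := (((τ.take j).filter (fun v => decide (v ∈ S))).map w).sum
def fF (j : ℕ) : ℝ := (((τ.take j).filter (fun v => decide (v ∉ S))).map w).sum

lemma cF_zero : cF S τ 0 = 0 := by simp [cF]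
lemma dF_zero : dF S τ 0 = 0 := by simp [dF]

omit [DecidableEq V] in
lemma take_succ_getElem' (l : List V) (j : ℕ) (h : j < l.length) :
    l.take (j + 1) = l.take j ++ [l[j]] := by
  rw [List.take_succ]; simp [List.getElem?_eq_getElem h]

lemma stepFacts : ∀ j, ∀ (h : j < τ.length),
    (τ[j]'h ∈ S ∧ cF S τ (j+1) = cF S τ j + 1 ∧ dF S τ (j+1) = dF S τ j ∧
      GF S w τ (j+1) = GF S w τ j + w (τ[j]'h) ∧ fF S w τ (j+1) = fF S w τ j)
  ∨ (τ[j]'h ∉ S ∧ cF S τ (j+1) = cF S τ j ∧ dF S τ (j+1) = dF S τ j + 1 ∧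
      GF S w τ (j+1) = GF S w τ j ∧ fF S w τ (j+1) = fF S w τ j + w (τ[j]'h)) := by
  intro j h
  have ht : τ.take (j+1) = τ.take j ++ [τ[j]'h] := take_succ_getElem' τ j h
  by_cases hv : τ[j]'h ∈ S
  · left
    refine ⟨hv, ?_, ?_, ?_, ?_⟩ <;>
      · simp only [cF, dF, GF, fF, ht, List.filter_append]
        simp [hv]
  · right
    refine ⟨hv, ?_, ?_, ?_, ?_⟩ <;>
      · simp only [cF, dF, GF, fF, ht, List.filter_append]
        simp [hv]

lemma cF_succ_le (j : ℕ) : cF S τ (j+1) ≤ cF S τ j + 1 := by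
  by_cases h : j < τ.length
  · rcases stepFacts S (fun _ => (0:ℝ)) τ j h with ⟨_, hc, _⟩ | ⟨_, hc, _⟩ <;> omega
  · have : τ.take (j+1) = τ.take j := by
      rw [List.take_of_length_le (by omega), List.take_of_length_le (by omega)]
    simp [cF, this]

lemma dF_succ_le (j : ℕ) : dF S τ (j+1) ≤ dF S τ j + 1 := by
  by_cases h : j < τ.length
  · rcases stepFacts S (fun _ => (0:ℝ)) τ j h with ⟨_, _, hd, _⟩ | ⟨_, _, hd, _⟩ <;> omega
  · have : τ.take (j+1) = τ.take j := by
      rw [List.take_of_length_le (by omega), List.take_of_length_le (by omega)]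
    simp [dF, this]

omit [DecidableEq V] in
lemma filter_take_eq' (p : V → Bool) (l : List V) (j : ℕ) :
    (l.filter p).take ((l.take j).filter p).length = (l.take j).filter p :=
  ((List.prefix_iff_eq_take.mp ((l.take_prefix j).filter p))).symm

lemma cF_le (j : ℕ) :
    cF S τ j ≤ (τ.filter (fun v => decide (v ∈ S))).length :=
  List.Sublist.length_le (((List.take_sublist j τ)).filter _)

lemma dF_le (j : ℕ) :
    dF S τ j ≤ (τ.filter (fun v => decide (v ∉ S))).length :=
  List.Sublist.length_le (((List.take_sublist j τ)).filter _)

end Aux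

/-- A minimum topological cut can be passed through "for free": if `τ` is a
schedule, `S` a minimum-weight topological cut and `σ = τ ∩· S`, then
`σ ∪· τ` is a valid schedule whose memory profile dominates that of `τ`. -/
theorem minCut_pass_through {V : Type*} [Fintype V] [DecidableEq V]
    (E : V → V → Prop)
    (hacyc : ∀ v, ¬ Relation.TransGen E v v)
    (w : V → ℝ)
    (S : Finset V) (hS : IsTopCut E (↑S : Set V))
    (hmin : ∀ S' : Finset V, IsTopCut E (↑S' : Set V) →
      ∑ v ∈ S, w v ≤ ∑ v ∈ S', w v)
    (τ : List V) (hτ : IsSchedule E τ) :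
    IsSchedule E
      (τ.filter (fun v => decide (v ∈ S)) ++ τ.filter (fun v => decide (v ∉ S))) ∧
    PtrDom
      (memProfile w
        (τ.filter (fun v => decide (v ∈ S)) ++ τ.filter (fun v => decide (v ∉ S))))
      (memProfile w τ) := by
  classical
  obtain ⟨hτnd, hτmem, hτcut⟩ := hτ
  set σ := τ.filter (fun v => decide (v ∈ S)) with hσdef
  set ρ := τ.filter (fun v => decide (v ∉ S)) with hρdef
  -- basic structure
  have hqeq : (fun v : V => decide (v ∉ S)) = (fun v : V => !(decide (v ∈ S))) := by
    funext v; simp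
  have hperm : (σ ++ ρ).Perm τ := by
    rw [hσdef, hρdef, hqeq]; exact List.filter_append_perm _ τ
  have hlen : σ.length + ρ.length = τ.length := by
    simpa using hperm.length_eq
  have hσnd : σ.Nodup := hτnd.filter _
  have hρnd : ρ.Nodup := hτnd.filter _
  have hdisj : σ.Disjoint ρ := by
    intro v hv1 hv2
    have h1 := List.of_mem_filter hv1
    have h2 := List.of_mem_filter hv2
    simp at h1 h2
    exact h2 h1
  have hmem' : ∀ v, v ∈ σ ++ ρ := by
    intro v
    rw [List.mem_append]
    by_cases hv : v ∈ S
    · exact Or.inl (List.mem_filter.mpr ⟨hτmem v, by simpa using hv⟩)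
    · exact Or.inr (List.mem_filter.mpr ⟨hτmem v, by simpa using hv⟩)
  -- cut facts for prefix finsets
  have hfincut_union : ∀ j : ℕ, IsTopCut E ↑(S ∪ (τ.take j).toFinset) := by
    intro j
    rw [Finset.coe_union]
    apply isTopCut_union hS
    rw [List.coe_toFinset]
    exact hτcut j
  have hfincut_inter : ∀ j : ℕ, IsTopCut E ↑(S ∩ (τ.take j).toFinset) := by
    intro j
    rw [Finset.coe_inter]
    apply isTopCut_inter hS
    rw [List.coe_toFinset]
    exact hτcut j
  have htaknd : ∀ j, (τ.take j).Nodup := fun j => (List.take_sublist j τ).nodup hτnd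
  -- sum identities
  have hsum_sd : ∀ j, ∑ v ∈ S ∪ (τ.take j).toFinset, w v = (∑ v ∈ S, w v) + fF S w τ j := by
    intro j
    rw [show S ∪ (τ.take j).toFinset = S ∪ ((τ.take j).toFinset \ S) from
      (Finset.union_sdiff_self_eq_union).symm,
      Finset.sum_union Finset.disjoint_sdiff]
    congr 1
    have h2 : (τ.take j).toFinset \ S
        = ((τ.take j).filter (fun v => decide (v ∉ S))).toFinset := by
      ext x; simp [List.mem_filter]
    rw [h2, List.sum_toFinset _ ((htaknd j).filter _)]
    rfl
  have hsum_int : ∀ j, ∑ v ∈ S ∩ (τ.take j).toFinset, w v = GF S w τ j := by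
    intro j
    have h2 : S ∩ (τ.take j).toFinset
        = ((τ.take j).filter (fun v => decide (v ∈ S))).toFinset := by
      ext x; simp [List.mem_filter, and_comm]
    rw [h2, List.sum_toFinset _ ((htaknd j).filter _)]
    rfl
  have hf0 : ∀ j, 0 ≤ fF S w τ j := by
    intro j
    have := hmin _ (hfincut_union j)
    rw [hsum_sd j] at this
    linarith
  have hGge : ∀ j, ∑ v ∈ S, w v ≤ GF S w τ j := by
    intro j
    have := hmin _ (hfincut_inter j)
    rwa [hsum_int j] at this
  have hcS : (σ.map w).sum = ∑ v ∈ S, w v := by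
    have hst : σ.toFinset = S := by
      ext v; simp [hσdef, List.mem_filter, hτmem v]
    calc (σ.map w).sum = ∑ v ∈ σ.toFinset, w v := (List.sum_toFinset _ hσnd).symm
      _ = ∑ v ∈ S, w v := by rw [hst]
  have hBsplit : ∀ j, ((τ.take j).map w).sum = GF S w τ j + fF S w τ j := by
    intro j
    have hperm2 : (((τ.take j).filter (fun v => decide (v ∈ S))) ++
        ((τ.take j).filter (fun v => decide (v ∉ S)))).Perm (τ.take j) := by
      rw [hqeq]; exact List.filter_append_perm _ _
    have h3 := (hperm2.map w).sum_eq
    simp only [List.map_append, List.sum_append] at h3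
    exact h3.symm
  -- endpoint values of cF and dF
  have hcn : cF S τ τ.length = σ.length := by
    simp only [cF, List.take_length]; rfl
  have hdn : dF S τ τ.length = ρ.length := by
    simp only [dF, List.take_length]; rfl
  have hc_surj : ∀ i ≤ σ.length, ∃ j ≤ τ.length, cF S τ j = i := by
    intro i hi
    exact nat_ivt (cF_zero S τ) (cF_succ_le S τ) (by omega)
  have hd_surj : ∀ i ≤ ρ.length, ∃ j ≤ τ.length, dF S τ j = i := by
    intro i hi
    exact nat_ivt (dF_zero S τ) (dF_succ_le S τ) (by omega)
  have hcle : ∀ j, cF S τ j ≤ σ.length := fun j => cF_le S τ j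
  have hdle : ∀ j, dF S τ j ≤ ρ.length := fun j => dF_le S τ j
  -- take identities
  have hσtake : ∀ j, σ.take (cF S τ j) = (τ.take j).filter (fun v => decide (v ∈ S)) :=
    fun j => filter_take_eq' _ τ j
  have hρtake : ∀ j, ρ.take (dF S τ j) = (τ.take j).filter (fun v => decide (v ∉ S)) :=
    fun j => filter_take_eq' _ τ j
  have htakemid : ∀ t : ℕ, (σ ++ ρ).take (σ.length + t) = σ ++ ρ.take t := by
    intro t
    rw [List.take_append]
    simp
  -- Part 1: schedule
  have hsched : IsSchedule E (σ ++ ρ) := by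
    refine ⟨hσnd.append hρnd hdisj, hmem', ?_⟩
    intro i
    rcases le_or_gt i σ.length with hi | hi
    · obtain ⟨j, hjn, hcj⟩ := hc_surj i hi
      have he : (σ ++ ρ).take i = (τ.take j).filter (fun v => decide (v ∈ S)) := by
        rw [List.take_append_of_le_length hi, ← hcj, hσtake j]
      rw [he]
      have hset : {v : V | v ∈ (τ.take j).filter (fun v => decide (v ∈ S))}
          = (↑S : Set V) ∩ {v | v ∈ τ.take j} := by
        ext v; simp [List.mem_filter, and_comm]
      rw [hset]
      exact isTopCut_inter hS (hτcut j)
    · rcases le_or_gt i (σ.length + ρ.length) with hi2 | hi2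
      · obtain ⟨j, hjn, hdj⟩ := hd_surj (i - σ.length) (by omega)
        have he : (σ ++ ρ).take i = σ ++ ρ.take (i - σ.length) := by
          have h5 := htakemid (i - σ.length)
          rwa [show σ.length + (i - σ.length) = i by omega] at h5
        rw [he]
        have hset : {v : V | v ∈ σ ++ ρ.take (i - σ.length)}
            = (↑S : Set V) ∪ {v | v ∈ τ.take j} := by
          ext v
          rw [← hdj, hρtake j]
          simp only [Set.mem_setOf_eq, List.mem_append, ← hdj, hρtake j, hσdef,
            List.mem_filter, Set.mem_union, Finset.mem_coe, decide_eq_true_eq]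
          constructor
          · rintro (⟨_, hv⟩ | ⟨hv1, _⟩)
            · exact Or.inl hv
            · exact Or.inr hv1
          · rintro (hv | hv)
            · exact Or.inl ⟨hτmem v, hv⟩
            · by_cases hvS : v ∈ S
              · exact Or.inl ⟨hτmem v, hvS⟩
              · exact Or.inr ⟨hv, hvS⟩
        rw [hset]
        exact isTopCut_union hS (hτcut j)
      · have he : (σ ++ ρ).take i = σ ++ ρ :=
          List.take_of_length_le (by rw [List.length_append]; omega)
        rw [he]
        intro u v _ _
        exact hmem' u
  refine ⟨hsched, ?_⟩
  -- Part 2: dominance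
  set A := memProfile w (σ ++ ρ) with hAdef
  set B := memProfile w τ with hBdef
  have hAlen : A.length = τ.length + 1 := by
    rw [hAdef, memProfile_length, List.length_append, hlen]
  have hBlen : B.length = τ.length + 1 := by
    rw [hBdef, memProfile_length]
  have hBget : ∀ j, j ≤ τ.length → B.getD j 0 = ((τ.take j).map w).sum := by
    intro j hj
    rw [hBdef]; exact memProfile_getD w τ j hj
  have hAc : ∀ j, A.getD (cF S τ j) 0 = GF S w τ j := by
    intro j
    rw [hAdef, memProfile_getD w _ _ (by rw [List.length_append]; have := hcle j; omega),
      List.take_append_of_le_length (hcle j), hσtake j]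
    rfl
  have hAd : ∀ j, A.getD (σ.length + dF S τ j) 0 = (∑ v ∈ S, w v) + fF S w τ j := by
    intro j
    rw [hAdef, memProfile_getD w _ _ (by rw [List.length_append]; have := hdle j; omega),
      htakemid, List.map_append, List.sum_append, hcS, hρtake j]
    rfl
  have hA_any : ∀ i, i ≤ τ.length → ∃ j ≤ τ.length, A.getD i 0 ≤ ((τ.take j).map w).sum := by
    intro i hi
    by_cases h : i ≤ σ.length
    · obtain ⟨j, hj, hcj⟩ := hc_surj i h
      refine ⟨j, hj, ?_⟩
      rw [← hcj, hAc j, hBsplit j]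
      linarith [hf0 j]
    · obtain ⟨j, hj, hdj⟩ := hd_surj (i - σ.length) (by omega)
      refine ⟨j, hj, ?_⟩
      rw [show i = σ.length + (i - σ.length) by omega, ← hdj, hAd j, hBsplit j]
      linarith [hGge j]
  -- maximum of B-profile
  obtain ⟨jm, hjm, hmax⟩ : ∃ j ≤ τ.length,
      ∀ i ≤ τ.length, ((τ.take i).map w).sum ≤ ((τ.take j).map w).sum := by
    obtain ⟨j, hj, hmax⟩ := Finset.exists_max_image (Finset.range (τ.length + 1))
      (fun i => ((τ.take i).map w).sum) ⟨0, by simp⟩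
    refine ⟨j, by simpa [Nat.lt_succ_iff] using hj, fun i hi => ?_⟩
    exact hmax i (Finset.mem_range.mpr (by omega))
  -- phase 1
  have ph1 : ∀ j, j ≤ jm → PtrDom (A.take (cF S τ j + 1)) (B.take (j + 1)) := by
    intro j
    induction j with
    | zero =>
      intro _
      rw [cF_zero]
      have hA0 : A.getD 0 0 = 0 := by
        rw [hAdef, memProfile_getD w _ 0 (by omega)]; simp
      have hB0 : B.getD 0 0 = 0 := by
        rw [hBdef, memProfile_getD w _ 0 (by omega)]; simp
      rw [take_succ_getD A 0 (by omega), take_succ_getD B 0 (by omega)]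
      simp only [List.take_zero, List.nil_append, hA0, hB0]
      exact ptrDom_single 0 0 le_rfl
    | succ j ih =>
      intro hj1
      have hjn : j < τ.length := by omega
      have ihp := ih (by omega)
      have hcj1 : cF S τ (j+1) ≤ j + 1 := by
        calc cF S τ (j+1) ≤ (τ.take (j+1)).length := List.length_filter_le _ _
          _ ≤ j + 1 := by rw [List.length_take]; omega
      rcases stepFacts S w τ j hjn with ⟨hv, hc, hd, hG, hf⟩ | ⟨hv, hc, hd, hG, hf⟩
      · -- τ[j] ∈ S: advance both pointers
        rw [hc]
        by_cases hwf : w (τ[j]'hjn) ≤ fF S w τ j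
        · -- advance A then B
          have step1 : PtrDom (A.take (cF S τ j + 1 + 1)) (B.take (j + 1)) := by
            apply ptrDom_extend_left (by rw [hAlen]; omega) (by rw [hBlen]; omega) ihp
            rw [show cF S τ j + 1 = cF S τ (j+1) by omega, hAc (j+1), hG,
              hBget j (by omega), hBsplit j]
            linarith
          apply ptrDom_extend_right (by rw [hAlen]; omega) (by rw [hBlen]; omega) step1
          rw [show cF S τ j + 1 = cF S τ (j+1) by omega, hAc (j+1),
            hBget (j+1) (by omega), hBsplit (j+1)]
          linarith [hf0 (j+1)]
        · -- advance B then A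
          have hwpos : 0 < w (τ[j]'hjn) := by
            have := hf0 j; push_neg at hwf; linarith
          have step1 : PtrDom (A.take (cF S τ j + 1)) (B.take (j + 1 + 1)) := by
            apply ptrDom_extend_right (by rw [hAlen]; omega) (by rw [hBlen]; omega) ihp
            rw [hAc j, hBget (j+1) (by omega), hBsplit (j+1), hG, hf]
            linarith [hf0 j]
          apply ptrDom_extend_left (by rw [hAlen]; omega) (by rw [hBlen]; omega) step1
          rw [show cF S τ j + 1 = cF S τ (j+1) by omega, hAc (j+1),
            hBget (j+1) (by omega), hBsplit (j+1)]
          linarith [hf0 (j+1)]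
      · -- τ[j] ∉ S: advance only B
        rw [hc]
        apply ptrDom_extend_right (by rw [hAlen]; have := hcle j; omega)
          (by rw [hBlen]; omega) ihp
        rw [hAc j, hBget (j+1) (by omega), hBsplit (j+1), hG]
        linarith [hf0 (j+1)]
  -- vertical segment at jm
  have vert : ∀ t, cF S τ jm + t ≤ σ.length + dF S τ jm →
      PtrDom (A.take (cF S τ jm + t + 1)) (B.take (jm + 1)) := by
    intro t
    induction t with
    | zero => intro _; simpa using ph1 jm le_rfl
    | succ t ih =>
      intro h
      have hia : cF S τ jm + t + 1 ≤ τ.length := by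
        have := hdle jm; omega
      have step := ih (by omega)
      rw [show cF S τ jm + (t + 1) = cF S τ jm + t + 1 by omega]
      apply ptrDom_extend_left (by rw [hAlen]; omega) (by rw [hBlen]; omega) step
      obtain ⟨j', hj', hle'⟩ := hA_any (cF S τ jm + t + 1) hia
      calc A.getD (cF S τ jm + t + 1) 0 ≤ ((τ.take j').map w).sum := hle'
        _ ≤ ((τ.take jm).map w).sum := hmax j' hj'
        _ = B.getD jm 0 := (hBget jm (by omega)).symm
  have vtop : PtrDom (A.take (σ.length + dF S τ jm + 1)) (B.take (jm + 1)) := by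
    have h1 := hcle jm
    have := vert (σ.length + dF S τ jm - cF S τ jm) (by omega)
    rwa [show cF S τ jm + (σ.length + dF S τ jm - cF S τ jm)
      = σ.length + dF S τ jm by omega] at this
  -- phase 2
  have ph2 : ∀ j, jm ≤ j → (j ≤ τ.length →
      PtrDom (A.take (σ.length + dF S τ j + 1)) (B.take (j + 1))) := by
    intro j hj
    induction j, hj using Nat.le_induction with
    | base => intro _; exact vtop
    | succ j hj ih =>
      intro hj1n
      have hjn : j < τ.length := by omega
      have ihp := ih (by omega)
      have hdj1 : dF S τ (j+1) ≤ ρ.length := hdle (j+1)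
      rcases stepFacts S w τ j hjn with ⟨hv, hc, hd, hG, hf⟩ | ⟨hv, hc, hd, hG, hf⟩
      · -- τ[j] ∈ S: advance only B
        rw [hd]
        apply ptrDom_extend_right (by rw [hAlen]; have := hdle j; omega)
          (by rw [hBlen]; omega) ihp
        rw [hAd j, hBget (j+1) (by omega), hBsplit (j+1), hf]
        linarith [hGge (j+1)]
      · -- τ[j] ∉ S: advance both
        rw [hd, show σ.length + (dF S τ j + 1) = σ.length + dF S τ j + 1 by omega]
        by_cases hwf : (∑ v ∈ S, w v) + fF S w τ j + w (τ[j]'hjn) ≤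
            GF S w τ j + fF S w τ j
        · -- advance A then B
          have step1 : PtrDom (A.take (σ.length + dF S τ j + 1 + 1)) (B.take (j + 1)) := by
            apply ptrDom_extend_left (by rw [hAlen]; omega) (by rw [hBlen]; omega) ihp
            rw [show σ.length + dF S τ j + 1 = σ.length + dF S τ (j+1) by omega,
              hAd (j+1), hf, hBget j (by omega), hBsplit j]
            linarith
          apply ptrDom_extend_right (by rw [hAlen]; omega) (by rw [hBlen]; omega) step1
          rw [show σ.length + dF S τ j + 1 = σ.length + dF S τ (j+1) by omega,
            hAd (j+1), hBget (j+1) (by omega), hBsplit (j+1)]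
          linarith [hGge (j+1)]
        · -- advance B then A
          push_neg at hwf
          have hwpos : 0 < w (τ[j]'hjn) := by
            have := hGge j; linarith
          have step1 : PtrDom (A.take (σ.length + dF S τ j + 1)) (B.take (j + 1 + 1)) := by
            apply ptrDom_extend_right (by rw [hAlen]; have := hdle j; omega)
              (by rw [hBlen]; omega) ihp
            rw [hAd j, hBget (j+1) (by omega), hBsplit (j+1), hG, hf]
            linarith [hGge j]
          apply ptrDom_extend_left (by rw [hAlen]; omega) (by rw [hBlen]; omega) step1
          rw [show σ.length + dF S τ j + 1 = σ.length + dF S τ (j+1) by omega,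
            hAd (j+1), hBget (j+1) (by omega), hBsplit (j+1), hG, hf]
          linarith [hGge j]
  have final := ph2 τ.length hjm le_rfl
  rw [hdn, hlen] at final
  rwa [show A.take (τ.length + 1) = A by rw [← hAlen, List.take_length],
    show B.take (τ.length + 1) = B by rw [← hBlen, List.take_length]] at final
end

section
/- Caduceus graphs are left-hereditary: if G is a caduceus graph and U is a topological cut of G, then the graph obtained from the induced subgraph G[U] by adding a new sink node connected from every node of G[U] with no remaining out-neighbor is again a caduceus graph. -/
/-- `x` and `y` appear consecutively (in this order) in the list `l`. -/
def AdjIn {V : Type*} (l : List V) (x y : V) : Prop :=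
  ∃ k : ℕ, l[k]? = some x ∧ l[k + 1]? = some y

namespace Cad

variable {α β : Type*} {l l₁ l₂ : List α} {x y a : α}

lemma adjIn_iff : AdjIn l x y ↔ ∃ k, l[k]? = some x ∧ l[k+1]? = some y := by
  simp [AdjIn]

lemma adjIn_mem_left (h : AdjIn l x y) : x ∈ l := by
  rw [adjIn_iff] at h; obtain ⟨k, h1, _⟩ := h
  exact List.mem_iff_getElem?.2 ⟨k, h1⟩

lemma adjIn_mem_right (h : AdjIn l x y) : y ∈ l := by
  rw [adjIn_iff] at h; obtain ⟨k, _, h2⟩ := h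
  exact List.mem_iff_getElem?.2 ⟨k+1, h2⟩

lemma not_adjIn_nil : ¬ AdjIn ([] : List α) x y := by
  simp [adjIn_iff]

lemma not_adjIn_singleton : ¬ AdjIn [a] x y := by
  rw [adjIn_iff]; rintro ⟨k, h1, h2⟩
  have : k + 1 < 1 := (List.getElem?_eq_some_iff.1 h2).1
  omega

lemma adjIn_append_left (h : AdjIn l₁ x y) : AdjIn (l₁ ++ l₂) x y := by
  rw [adjIn_iff] at h ⊢
  obtain ⟨k, h1, h2⟩ := h
  have hk2 : k + 1 < l₁.length := (List.getElem?_eq_some_iff.1 h2).1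
  exact ⟨k, by rw [List.getElem?_append_left (by omega)]; exact h1,
    by rw [List.getElem?_append_left hk2]; exact h2⟩

lemma adjIn_append_right (h : AdjIn l₂ x y) : AdjIn (l₁ ++ l₂) x y := by
  rw [adjIn_iff] at h ⊢
  obtain ⟨k, h1, h2⟩ := h
  refine ⟨l₁.length + k, ?_, ?_⟩
  · rw [List.getElem?_append_right (by omega)]; simpa using h1
  · rw [List.getElem?_append_right (by omega)]
    have : l₁.length + k + 1 - l₁.length = k + 1 := by omega
    rw [this]; exact h2

lemma adjIn_append_iff : AdjIn (l₁ ++ l₂) x y ↔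
    AdjIn l₁ x y ∨ AdjIn l₂ x y ∨ (l₁.getLast? = some x ∧ l₂.head? = some y) := by
  constructor
  · rw [adjIn_iff]
    rintro ⟨k, h1, h2⟩
    by_cases hk : k + 1 < l₁.length
    · exact Or.inl (adjIn_iff.2 ⟨k, by rwa [List.getElem?_append_left (by omega)] at h1,
        by rwa [List.getElem?_append_left hk] at h2⟩)
    · by_cases hk' : k < l₁.length
      · -- crossing: k = l₁.length - 1
        have hkeq : k = l₁.length - 1 := by omega
        refine Or.inr (Or.inr ⟨?_, ?_⟩)
        · rw [List.getLast?_eq_getElem?, ← hkeq, ← List.getElem?_append_left hk']; exact h1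
        · have hlen : l₁.length ≤ k + 1 := by omega
          rw [List.getElem?_append_right hlen] at h2
          have : k + 1 - l₁.length = 0 := by omega
          rw [this] at h2
          rw [List.head?_eq_getElem?]; exact h2
      · refine Or.inr (Or.inl (adjIn_iff.2 ⟨k - l₁.length, ?_, ?_⟩))
        · rw [← List.getElem?_append_right (by omega)]; exact h1
        · have : k - l₁.length + 1 = k + 1 - l₁.length := by omega
          rw [this, ← List.getElem?_append_right (by omega)]; exact h2
  · rintro (h | h | ⟨h1, h2⟩)
    · exact adjIn_append_left h
    · exact adjIn_append_right h
    · rw [adjIn_iff]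
      have hne : l₁ ≠ [] := by rintro rfl; simp at h1
      refine ⟨l₁.length - 1, ?_, ?_⟩
      · rw [List.getElem?_append_left (by
          have := List.length_pos_iff.2 hne; omega)]
        rw [← List.getLast?_eq_getElem?]; exact h1
      · have := List.length_pos_iff.2 hne
        have h' : l₁.length - 1 + 1 = l₁.length := by omega
        rw [h', List.getElem?_append_right (by omega)]
        simpa [List.head?_eq_getElem?] using h2

lemma adjIn_cons_iff : AdjIn (a :: l) x y ↔ (x = a ∧ l.head? = some y) ∨ AdjIn l x y := by
  have : a :: l = [a] ++ l := rfl
  rw [this, adjIn_append_iff]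
  simp [not_adjIn_singleton]
  tauto

lemma adjIn_map (f : α → β) {x y : β} :
    AdjIn (l.map f) x y ↔ ∃ a b, AdjIn l a b ∧ f a = x ∧ f b = y := by
  constructor
  · rw [adjIn_iff]
    rintro ⟨k, h1, h2⟩
    rw [List.getElem?_map] at h1 h2
    obtain ⟨a, ha, rfl⟩ := Option.map_eq_some_iff.1 h1
    obtain ⟨b, hb, rfl⟩ := Option.map_eq_some_iff.1 h2
    exact ⟨a, b, adjIn_iff.2 ⟨k, ha, hb⟩, rfl, rfl⟩
  · rintro ⟨a, b, h, rfl, rfl⟩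
    rw [adjIn_iff] at h ⊢
    obtain ⟨k, h1, h2⟩ := h
    exact ⟨k, by simp [h1], by simp [h2]⟩

lemma adjIn_of_prefix (h : l₁ <+: l₂) (ha : AdjIn l₁ x y) : AdjIn l₂ x y := by
  obtain ⟨r, rfl⟩ := h; exact adjIn_append_left ha

lemma adjIn_last_mem_dropLast (h : AdjIn (l ++ [a]) x y) : x ∈ l := by
  rw [adjIn_iff] at h
  obtain ⟨k, h1, h2⟩ := h
  have hk2 := (List.getElem?_eq_some_iff.1 h2).1
  simp at hk2
  rw [List.getElem?_append_left (by omega)] at h1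
  exact List.mem_iff_getElem?.2 ⟨k, h1⟩

end Cad

namespace Cad

variable {α : Type*} {q : α → Bool}

lemma getElem?_length_takeWhile :
    ∀ (l : List α) (x : α), l[(l.takeWhile q).length]? = some x → q x = false := by
  intro l
  induction l with
  | nil => simp
  | cons a tl ih =>
    intro x hx
    rw [List.takeWhile_cons] at hx
    by_cases hqa : q a
    · rw [if_pos hqa] at hx
      simp only [List.length_cons, List.getElem?_cons_succ] at hx
      exact ih x hx
    · rw [if_neg hqa] at hx
      simp only [List.length_nil, List.getElem?_cons_zero, Option.some_inj] at hx
      subst hx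
      simpa using hqa

lemma chain_not {l : List α} (h : ∀ x y, AdjIn l x y → q y = true → q x = true)
    {i : ℕ} {x : α} (hget : l[i]? = some x) (hx : q x = false) :
    ∀ j, i ≤ j → ∀ y, l[j]? = some y → q y = false := by
  intro j hij
  induction j, hij using Nat.le_induction with
  | base => intro y hy; rw [hget] at hy; cases hy; exact hx
  | succ j hij ih =>
    intro y hy
    have hjlt : j < l.length := by
      have := (List.getElem?_eq_some_iff.1 hy).1; omega
    obtain ⟨z, hz⟩ : ∃ z, l[j]? = some z := ⟨l[j], by simp [hjlt]⟩
    have hz' := ih z hz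
    by_contra hqy
    have : q y = true := by simpa using hqy
    have := h z y ⟨j, by simpa using hz,
      by simpa using hy⟩ this
    rw [hz'] at this; cases this

lemma after_takeWhile {l : List α} (h : ∀ x y, AdjIn l x y → q y = true → q x = true)
    {i : ℕ} {x : α} (hi : (l.takeWhile q).length ≤ i) (hget : l[i]? = some x) :
    q x = false := by
  set m := (l.takeWhile q).length with hm
  have hil : i < l.length := (List.getElem?_eq_some_iff.1 hget).1
  have hml : m < l.length := by omega
  obtain ⟨z, hz⟩ : ∃ z, l[m]? = some z := ⟨l[m], by simp [hml]⟩
  have hqz : q z = false := getElem?_length_takeWhile l z hz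
  exact chain_not h hz hqz i hi x hget

lemma idx_lt_takeWhile {l : List α} (h : ∀ x y, AdjIn l x y → q y = true → q x = true)
    {i : ℕ} {x : α} (hget : l[i]? = some x) (hx : q x = true) :
    i < (l.takeWhile q).length := by
  by_contra hc
  have := after_takeWhile h (by omega) hget
  rw [hx] at this; cases this

lemma mem_takeWhile_of {l : List α} (h : ∀ x y, AdjIn l x y → q y = true → q x = true)
    {x : α} (hx : x ∈ l) (hqx : q x = true) : x ∈ l.takeWhile q := by
  obtain ⟨i, hi⟩ := List.mem_iff_getElem?.1 hx
  have hlt := idx_lt_takeWhile h hi hqx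
  have := (List.takeWhile_prefix q (l := l)).getElem hlt
  rw [List.mem_iff_getElem?]
  exact ⟨i, by rw [List.getElem?_eq_some_iff]; exact ⟨hlt, by
    rw [this]; exact (List.getElem?_eq_some_iff.1 hi).2⟩⟩

end Cad

namespace Cad

variable {α β γ : Type*}

lemma flatten_filterMap_sublist (G : α → Option (List γ)) (h : α → List γ)
    (hG : ∀ a x, G a = some x → List.Sublist x (h a)) (l : List α) :
    List.Sublist (l.filterMap G).flatten ((l.map h).flatten) := by
  induction l with
  | nil => simp
  | cons a tl ih =>
    rw [List.filterMap_cons]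
    cases hGa : G a with
    | none =>
      simp only [List.map_cons, List.flatten_cons]
      exact ih.trans (List.sublist_append_right _ _)
    | some x =>
      simp only [List.flatten_cons, List.map_cons]
      exact List.Sublist.append (hG a x hGa) ih

lemma adjIn_nodup_succ {l : List α} {x y : α} {k : ℕ} (hnd : l.Nodup)
    (h : AdjIn l x y) (hk : l[k]? = some x) : l[k+1]? = some y := by
  rw [adjIn_iff] at h
  obtain ⟨k', h1, h2⟩ := h
  have hk'lt : k' < l.length := (List.getElem?_eq_some_iff.1 h1).1
  have : k' = k := (List.getElem?_inj hk'lt hnd).1 (by rw [h1, hk])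
  subst this; exact h2

end Cad

/-- The digraph with edge relation `E` is a caduceus graph: there is a staff
(a nonempty duplicate-free directed path `s`) and a list of bends, each bend
being a directed path from a staff node `bd.1` to a strictly later staff node
`bd.2.2` through a nonempty list `bd.2.1` of internal nodes; internal bend
nodes are distinct across bends and disjoint from the staff; every vertex is
a staff node or an internal bend node; and the edges are exactly the
consecutive pairs of the staff and of the bends. -/
def IsCaduceus {V : Type*} (E : V → V → Prop) : Prop :=
  ∃ (s : List V) (bends : List (V × List V × V)),
    s ≠ [] ∧ s.Nodup ∧
    (∀ bd ∈ bends, bd.2.1 ≠ [] ∧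
      ∃ i j : ℕ, i < j ∧ s[i]? = some bd.1 ∧ s[j]? = some bd.2.2) ∧
    (bends.map (fun bd => bd.2.1)).flatten.Nodup ∧
    (∀ bd ∈ bends, ∀ u ∈ bd.2.1, u ∉ s) ∧
    (∀ v : V, v ∈ s ∨ ∃ bd ∈ bends, v ∈ bd.2.1) ∧
    (∀ x y, E x y ↔
      (AdjIn s x y ∨ ∃ bd ∈ bends, AdjIn (bd.1 :: (bd.2.1 ++ [bd.2.2])) x y))

/-- Caduceus graphs are left-hereditary: for a caduceus graph `G` and a
topological cut `U`, adding a fresh sink (reached from every node of `G[U]`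
with no out-neighbor inside `U`) to the induced subgraph `G[U]` yields a
caduceus graph again. -/
theorem caduceus_left_hereditary {V : Type*} (E : V → V → Prop)
    (hG : IsCaduceus E)
    (U : Set V) (hU : ∀ u v, E u v → v ∈ U → u ∈ U) :
    IsCaduceus (fun x y : Option {v // v ∈ U} =>
      match x, y with
      | some u, some v => E u.1 v.1
      | some u, none => ∀ z : {v // v ∈ U}, ¬ E u.1 z.1
      | none, _ => False) := by
  classical
  obtain ⟨s, bends, hs_ne, hs_nd, hbends, hflat, hdisjS, hcover, hE⟩ := hG
  set q : V → Bool := fun v => decide (v ∈ U) with hq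
  have hqU : ∀ v : V, q v = true ↔ v ∈ U := fun v => by simp [hq]
  -- edges from index pairs
  have hEstaff : ∀ (k : ℕ) (x y : V), s[k]? = some x → s[k+1]? = some y → E x y := by
    intro k x y h1 h2
    exact (hE x y).2 (Or.inl (Cad.adjIn_iff.2 ⟨k, h1, h2⟩))
  have hadjL : ∀ (bd : V × List V × V) (x y : V), AdjIn bd.2.1 x y →
      AdjIn (bd.1 :: (bd.2.1 ++ [bd.2.2])) x y := by
    intro bd x y hxy
    have h1 : AdjIn (bd.2.1 ++ [bd.2.2]) x y := Cad.adjIn_append_left hxy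
    have h2 := Cad.adjIn_append_right (l₁ := [bd.1]) h1
    simpa using h2
  have hEbd : ∀ bd ∈ bends, ∀ (x y : V),
      AdjIn (bd.1 :: (bd.2.1 ++ [bd.2.2])) x y → E x y := by
    intro bd hbd x y hxy
    exact (hE x y).2 (Or.inr ⟨bd, hbd, hxy⟩)
  have hpath_s : ∀ x y, AdjIn s x y → q y = true → q x = true := by
    intro x y hxy hy
    exact (hqU x).2 (hU x y ((hE x y).2 (Or.inl hxy)) ((hqU y).1 hy))
  have hpath_L : ∀ bd ∈ bends, ∀ x y, AdjIn bd.2.1 x y → q y = true → q x = true := by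
    intro bd hbd x y hxy hy
    exact (hqU x).2 (hU x y (hEbd bd hbd x y (hadjL bd x y hxy)) ((hqU y).1 hy))
  set t := s.takeWhile q with ht
  obtain ⟨rs, hrs⟩ : t <+: s := List.takeWhile_prefix q
  have ht_get : ∀ i : ℕ, i < t.length → s[i]? = t[i]? := by
    intro i hi
    rw [← hrs, List.getElem?_append_left hi]
  have htU : ∀ x ∈ t, x ∈ U := by
    intro x hx
    have := List.mem_takeWhile_imp hx
    exact (hqU x).1 this
  have hS_after : ∀ (i : ℕ) (x : V), t.length ≤ i → s[i]? = some x → x ∉ U := by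
    intro i x hi hx hxU
    have := Cad.after_takeWhile hpath_s hi hx
    rw [(hqU x).2 hxU] at this; cases this
  have hS_idx : ∀ (i : ℕ) (x : V), s[i]? = some x → x ∈ U → i < t.length := by
    intro i x hx hxU
    exact Cad.idx_lt_takeWhile hpath_s hx ((hqU x).2 hxU)
  have hS_mem : ∀ x ∈ s, x ∈ U → x ∈ t :=
    fun x hx hxU => Cad.mem_takeWhile_of hpath_s hx ((hqU x).2 hxU)
  -- bend internal list facts
  have hPU : ∀ (bd : V × List V × V), ∀ x ∈ bd.2.1.takeWhile q, x ∈ U := by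
    intro bd x hx
    exact (hqU x).1 (List.mem_takeWhile_imp hx)
  have hB_after : ∀ bd ∈ bends, ∀ (i : ℕ) (x : V),
      (bd.2.1.takeWhile q).length ≤ i → bd.2.1[i]? = some x → x ∉ U := by
    intro bd hbd i x hi hx hxU
    have := Cad.after_takeWhile (hpath_L bd hbd) hi hx
    rw [(hqU x).2 hxU] at this; cases this
  have hB_idx : ∀ bd ∈ bends, ∀ (i : ℕ) (x : V), bd.2.1[i]? = some x → x ∈ U →
      i < (bd.2.1.takeWhile q).length := by
    intro bd hbd i x hx hxU
    exact Cad.idx_lt_takeWhile (hpath_L bd hbd) hx ((hqU x).2 hxU)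
  have hB_mem : ∀ bd ∈ bends, ∀ x ∈ bd.2.1, x ∈ U → x ∈ bd.2.1.takeWhile q := by
    intro bd hbd x hx hxU
    exact Cad.mem_takeWhile_of (hpath_L bd hbd) hx ((hqU x).2 hxU)
  have hP_get : ∀ (bd : V × List V × V) (i : ℕ), i < (bd.2.1.takeWhile q).length →
      bd.2.1[i]? = (bd.2.1.takeWhile q)[i]? := by
    intro bd i hi
    have hpre : bd.2.1.takeWhile q <+: bd.2.1 := List.takeWhile_prefix q
    have hlen : i < bd.2.1.length := lt_of_lt_of_le hi hpre.length_le
    rw [List.getElem?_eq_getElem hlen, List.getElem?_eq_getElem hi, hpre.getElem hi]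
  -- nodup facts
  have hLnd : ∀ bd ∈ bends, bd.2.1.Nodup := by
    intro bd hbd
    exact hflat.sublist (List.sublist_flatten_of_mem (List.mem_map_of_mem (f := fun bd : V × List V × V => bd.2.1) hbd))
  have hdisj2 : ∀ bd ∈ bends, ∀ bd' ∈ bends, bd ≠ bd' → ∀ x ∈ bd.2.1, x ∉ bd'.2.1 := by
    have hpw : bends.Pairwise (fun bd bd' => List.Disjoint bd.2.1 bd'.2.1) := by
      have := (List.nodup_flatten.1 hflat).2
      rwa [List.pairwise_map] at this
    intro bd hbd bd' hbd' hne x hx hx'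
    have hsym : Symmetric (fun bd bd' : V × List V × V => List.Disjoint bd.2.1 bd'.2.1) := by
      intro a b hab; exact List.Disjoint.symm hab
    haveI : Std.Symm (fun bd bd' : V × List V × V => List.Disjoint bd.2.1 bd'.2.1) :=
      ⟨fun a b h => hsym h⟩
    exact (hpw.forall hbd hbd' hne) hx hx'
  have hmemS : ∀ (i : ℕ) (x : V), s[i]? = some x → x ∈ s := by
    intro i x hx; exact List.mem_iff_getElem?.2 ⟨i, hx⟩
  have hpathnd : ∀ bd ∈ bends, (bd.1 :: (bd.2.1 ++ [bd.2.2])).Nodup := by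
    intro bd hbd
    obtain ⟨-, i, j, hij, hi, hj⟩ := hbends bd hbd
    have has : bd.1 ∈ s := hmemS i _ hi
    have hbs : bd.2.2 ∈ s := hmemS j _ hj
    have hab : bd.1 ≠ bd.2.2 := by
      rintro h
      rw [h] at hi
      have hlt : i < s.length := (List.getElem?_eq_some_iff.1 hi).1
      have : i = j := (List.getElem?_inj hlt hs_nd).1 (hi.trans hj.symm)
      omega
    have hnotinL : ∀ y ∈ s, y ∉ bd.2.1 := fun y hy hyL => hdisjS bd hbd y hyL hy
    simp only [List.nodup_cons, List.mem_append, List.mem_singleton]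
    refine ⟨?_, ?_⟩
    · rintro (h | h)
      · exact hnotinL bd.1 has h
      · exact hab h
    · rw [List.nodup_append]
      exact ⟨hLnd bd hbd, List.nodup_singleton _,
        fun y hy b hb => by simp only [List.mem_singleton] at hb; subst hb; rintro rfl; exact hnotinL _ hbs hy⟩
  -- edge from bend start to first internal node
  have hE_a_head : ∀ bd ∈ bends, ∀ z : V, bd.2.1[0]? = some z → E bd.1 z := by
    intro bd hbd z hz
    refine hEbd bd hbd _ _ (Cad.adjIn_iff.2 ⟨0, by simp, ?_⟩)
    have h0 : 0 < bd.2.1.length := by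
      have := (List.getElem?_eq_some_iff.1 hz).1; omega
    simp only [List.getElem?_cons_succ]
    rw [List.getElem?_append_left h0]; exact hz
  -- first internal node in U when the takeWhile part is nonempty
  have hhead_U : ∀ bd ∈ bends, ∀ i : ℕ, ∀ v : V, bd.2.1[i]? = some v → v ∈ U →
      ∃ z, bd.2.1[0]? = some z ∧ z ∈ U ∧ bd.1 ∈ U := by
    intro bd hbd i v hi hv
    have hiP : i < (bd.2.1.takeWhile q).length := hB_idx bd hbd i v hi hv
    have h0P : 0 < (bd.2.1.takeWhile q).length := by omega
    obtain ⟨z, hz⟩ : ∃ z, (bd.2.1.takeWhile q)[0]? = some z :=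
      ⟨(bd.2.1.takeWhile q)[0], by simp [h0P]⟩
    have hz' : bd.2.1[0]? = some z := by rw [hP_get bd 0 h0P]; exact hz
    have hzU : z ∈ U := hPU bd z (List.mem_iff_getElem?.2 ⟨0, hz⟩)
    exact ⟨z, hz', hzU, hU _ _ (hE_a_head bd hbd z hz') hzU⟩
  have hbd_mem_s : ∀ bd ∈ bends, bd.1 ∈ s ∧ bd.2.2 ∈ s := by
    intro bd hbd
    obtain ⟨-, i, j, hij, hi, hj⟩ := hbends bd hbd
    exact ⟨hmemS i _ hi, hmemS j _ hj⟩
  -- the vertex embedding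
  set f : V → Option {v // v ∈ U} := fun v => if h : v ∈ U then some ⟨v, h⟩ else none
    with hfdef
  have hf_some : ∀ (v : V) (h : v ∈ U), f v = some ⟨v, h⟩ := by
    intro v h; simp [hfdef, h]
  have hf_eq : ∀ (v : V) (x : {v // v ∈ U}), f v = some x → v = x.1 := by
    intro v x hx
    by_cases h : v ∈ U
    · rw [hf_some v h] at hx; cases hx; rfl
    · simp [hfdef, h] at hx
  have hf_sub : ∀ x : {v // v ∈ U}, f x.1 = some x := by
    intro x; rw [hf_some x.1 x.2]
  by_cases htne : t = []
  · -- trivial case : U is empty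
    have hUe : ∀ v : V, v ∉ U := by
      have hsnot : ∀ x ∈ s, x ∉ U := by
        intro x hx
        obtain ⟨i, hi⟩ := List.mem_iff_getElem?.1 hx
        exact hS_after i x (by rw [htne]; simp) hi
      intro v hv
      rcases hcover v with hvs | ⟨bd, hbd, hvL⟩
      · exact hsnot v hvs hv
      · obtain ⟨i, hi⟩ := List.mem_iff_getElem?.1 hvL
        obtain ⟨z, hz, hzU, haU⟩ := hhead_U bd hbd i v hi hv
        exact hsnot bd.1 (hbd_mem_s bd hbd).1 haU
    refine ⟨[none], [], by simp, by simp, by simp, by simp, by simp, ?_, ?_⟩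
    · intro v
      left
      rcases v with _ | u
      · simp
      · exact absurd u.2 (hUe u.1)
    · intro x y
      rcases x with _ | u
      · exact iff_of_false (fun h => h)
          (by rintro (h | ⟨bd, hbd, -⟩)
              · exact Cad.not_adjIn_singleton h
              · simp at hbd)
      · exact absurd u.2 (hUe u.1)
  · -- main case : t ≠ []
    have htpos : 0 < t.length := List.length_pos_iff.2 htne
    obtain ⟨w, hw⟩ : ∃ w, t.getLast? = some w :=
      ⟨t.getLast htne, List.getLast?_eq_getLast_of_ne_nil htne⟩
    have hwgt : t[t.length - 1]? = some w := by
      rw [← List.getLast?_eq_getElem?]; exact hw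
    have hwt : w ∈ t := List.mem_iff_getElem?.2 ⟨_, hwgt⟩
    have hwU : w ∈ U := htU w hwt
    have hws : s[t.length - 1]? = some w := by
      rw [ht_get _ (by omega)]; exact hwgt
    have hwmem_s : w ∈ s := hmemS _ _ hws
    have hw_idx : ∀ k, s[k]? = some w → k = t.length - 1 := by
      intro k hk
      have hlt : k < s.length := (List.getElem?_eq_some_iff.1 hk).1
      exact (List.getElem?_inj hlt hs_nd).1 (hk.trans hws.symm)
    -- last node of a cut bend is a sink
    have hGsink : ∀ bd ∈ bends, bd.2.2 ∉ U → ∀ u : V,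
        (bd.2.1.takeWhile q).getLast? = some u → ∀ z, E u z → z ∉ U := by
      intro bd hbd hbU u hu z hEz hzU
      have hPne : bd.2.1.takeWhile q ≠ [] := by
        intro h; rw [h] at hu; simp at hu
      have hPpos : 0 < (bd.2.1.takeWhile q).length := List.length_pos_iff.2 hPne
      have hup : (bd.2.1.takeWhile q)[(bd.2.1.takeWhile q).length - 1]? = some u := by
        rw [← List.getLast?_eq_getElem?]; exact hu
      have huL : bd.2.1[(bd.2.1.takeWhile q).length - 1]? = some u := by
        rw [hP_get bd _ (by omega)]; exact hup
      have huLmem : u ∈ bd.2.1 := List.mem_iff_getElem?.2 ⟨_, huL⟩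
      have hPle : (bd.2.1.takeWhile q).length ≤ bd.2.1.length :=
        (List.takeWhile_prefix q).length_le
      rcases (hE u z).1 hEz with hstf | ⟨bd', hbd', hadj⟩
      · exact hdisjS bd hbd u huLmem (Cad.adjIn_mem_left hstf)
      · by_cases hbd'eq : bd' = bd
        · subst hbd'eq
          have hpath_u : (bd'.1 :: (bd'.2.1 ++ [bd'.2.2]))[(bd'.2.1.takeWhile q).length]? =
              some u := by
            have hP1 : (bd'.2.1.takeWhile q).length = ((bd'.2.1.takeWhile q).length - 1) + 1 := by
              omega
            rw [hP1, List.getElem?_cons_succ,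
              List.getElem?_append_left (by omega : (bd'.2.1.takeWhile q).length - 1 < bd'.2.1.length)]
            exact huL
          have hz' := Cad.adjIn_nodup_succ (hpathnd bd' hbd) hadj hpath_u
          rw [List.getElem?_cons_succ] at hz'
          by_cases hPL : (bd'.2.1.takeWhile q).length < bd'.2.1.length
          · rw [List.getElem?_append_left hPL] at hz'
            exact hB_after bd' hbd _ z le_rfl hz' hzU
          · have hPeq : (bd'.2.1.takeWhile q).length = bd'.2.1.length := by omega
            rw [List.getElem?_append_right (by omega), hPeq] at hz'
            simp at hz'
            exact hbU (hz' ▸ hzU)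
        · have humem := Cad.adjIn_mem_left hadj
          simp only [List.mem_cons, List.mem_append, List.mem_singleton] at humem
          rcases humem with h | h | h | h
          · exact hdisjS bd hbd u huLmem (h ▸ (hbd_mem_s bd' hbd').1)
          · exact hdisj2 bd hbd bd' hbd' (fun hx => hbd'eq hx.symm) u huLmem h
          · exact hdisjS bd hbd u huLmem (h ▸ (hbd_mem_s bd' hbd').2)
          · simp at h
    -- choose the special bend bd₀ (or a dummy)
    obtain ⟨bd₀, hbd₀w, hbd₀P, hbd₀E⟩ : ∃ bd₀ : V × List V × V, bd₀.1 = w ∧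
        (bd₀.2.1.takeWhile q ≠ [] → bd₀ ∈ bends ∧ bd₀.2.2 ∉ U) ∧
        (bd₀.2.1.takeWhile q = [] → (∀ z, E w z → z ∉ U) ∧ bd₀ ∉ bends) := by
      by_cases hA : ∃ bd ∈ bends, bd.1 = w ∧ ∃ u1, bd.2.1[0]? = some u1 ∧ u1 ∈ U
      · obtain ⟨bd₀, hbd₀, hb1, u1, hu1, hu1U⟩ := hA
        have hPne : bd₀.2.1.takeWhile q ≠ [] := by
          have h0 := hB_idx bd₀ hbd₀ 0 u1 hu1 hu1U
          intro hcon; rw [hcon] at h0; simp at h0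
        refine ⟨bd₀, hb1, fun _ => ⟨hbd₀, ?_⟩, fun hP => absurd hPne (by simp [hP])⟩
        intro hbU
        obtain ⟨-, i, j, hij, hi, hj⟩ := hbends bd₀ hbd₀
        have hj' : j < t.length := hS_idx j _ hj hbU
        rw [hb1] at hi
        have : i = t.length - 1 := hw_idx i hi
        omega
      · refine ⟨(w, [], w), rfl, fun h => absurd rfl h, fun _ => ⟨?_, ?_⟩⟩
        · intro z hEz hzU
          rcases (hE w z).1 hEz with hstf | ⟨bd, hbd, hadj⟩
          · obtain ⟨k, h1, h2⟩ := Cad.adjIn_iff.1 hstf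
            have hk : k = t.length - 1 := hw_idx k h1
            subst hk
            have : t.length - 1 + 1 = t.length := by omega
            rw [this] at h2
            exact hS_after t.length z le_rfl h2 hzU
          · obtain ⟨k, h1, h2⟩ := Cad.adjIn_iff.1 hadj
            match k, h1, h2 with
            | 0, h1, h2 =>
              simp only [List.getElem?_cons_zero, Option.some_inj] at h1
              rw [List.getElem?_cons_succ] at h2
              have hLne : bd.2.1 ≠ [] := (hbends bd hbd).1
              have hLpos : 0 < bd.2.1.length := List.length_pos_iff.2 hLne
              rw [List.getElem?_append_left hLpos] at h2
              exact hA ⟨bd, hbd, h1, z, h2, hzU⟩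
            | (k+1), h1, h2 =>
              rw [List.getElem?_cons_succ] at h1 h2
              by_cases hkL : k < bd.2.1.length
              · rw [List.getElem?_append_left hkL] at h1
                exact hdisjS bd hbd w (List.mem_iff_getElem?.2 ⟨k, h1⟩) hwmem_s
              · have hk2 : k + 1 < (bd.2.1 ++ [bd.2.2]).length :=
                  (List.getElem?_eq_some_iff.1 h2).1
                simp at hk2
                omega
        · intro hmem; exact (hbends _ hmem).1 rfl
    -- more edge construction facts
    have hEL : ∀ bd ∈ bends, ∀ (k : ℕ) (x y : V),
        bd.2.1[k]? = some x → bd.2.1[k+1]? = some y → E x y := by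
      intro bd hbd k x y h1 h2
      exact hEbd bd hbd x y (hadjL bd x y (Cad.adjIn_iff.2 ⟨k, h1, h2⟩))
    have hElast : ∀ bd ∈ bends, ∀ y : V, bd.2.1.getLast? = some y → E y bd.2.2 := by
      intro bd hbd y hy
      have hLne : bd.2.1 ≠ [] := by intro h; rw [h] at hy; simp at hy
      have hLpos : 0 < bd.2.1.length := List.length_pos_iff.2 hLne
      refine hEbd bd hbd y bd.2.2 (Cad.adjIn_iff.2 ⟨bd.2.1.length, ?_, ?_⟩)
      · have h1 : bd.2.1.length = (bd.2.1.length - 1) + 1 := by omega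
        rw [h1, List.getElem?_cons_succ, List.getElem?_append_left (by omega),
          ← List.getLast?_eq_getElem?]
        exact hy
      · rw [List.getElem?_cons_succ, List.getElem?_append_right le_rfl]
        simp
    have hfullP : ∀ bd ∈ bends, bd.2.2 ∈ U →
        (bd.2.1.takeWhile q).length = bd.2.1.length := by
      intro bd hbd hbU
      have hLne : bd.2.1 ≠ [] := (hbends bd hbd).1
      have hLpos : 0 < bd.2.1.length := List.length_pos_iff.2 hLne
      obtain ⟨y, hy⟩ : ∃ y, bd.2.1.getLast? = some y :=
        ⟨bd.2.1.getLast hLne, List.getLast?_eq_getLast_of_ne_nil hLne⟩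
      have hyU : y ∈ U := hU y bd.2.2 (hElast bd hbd y hy) hbU
      have hylt := hB_idx bd hbd (bd.2.1.length - 1) y
        (by rw [← List.getLast?_eq_getElem?]; exact hy) hyU
      have hle : (bd.2.1.takeWhile q).length ≤ bd.2.1.length :=
        (List.takeWhile_prefix q).length_le
      omega
    have hfull_aU : ∀ bd ∈ bends, bd.2.2 ∈ U → bd.1 ∈ U := by
      intro bd hbd hbU
      have hLne : bd.2.1 ≠ [] := (hbends bd hbd).1
      have hLpos : 0 < bd.2.1.length := List.length_pos_iff.2 hLne
      have hP : 0 < (bd.2.1.takeWhile q).length := by rw [hfullP bd hbd hbU]; exact hLpos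
      obtain ⟨z, hz⟩ : ∃ z, (bd.2.1.takeWhile q)[0]? = some z :=
        ⟨(bd.2.1.takeWhile q)[0], by simp [hP]⟩
      have hz' : bd.2.1[0]? = some z := by rw [hP_get bd 0 hP]; exact hz
      exact hU _ _ (hE_a_head bd hbd z hz')
        (hPU bd z (List.mem_iff_getElem?.2 ⟨0, hz⟩))
    -- construction
    set P0 := bd₀.2.1.takeWhile q with hP0def
    set Q := t ++ P0 with hQdef
    have hP0U : ∀ x ∈ P0, x ∈ U := hPU bd₀
    have hP0L : ∀ x ∈ P0, x ∈ bd₀.2.1 :=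
      fun x hx => (List.takeWhile_prefix q).subset hx
    have hQU : ∀ x ∈ Q, x ∈ U := by
      intro x hx
      rcases List.mem_append.1 hx with h | h
      exacts [htU x h, hP0U x h]
    have hQne : Q ≠ [] := by
      rw [hQdef]; intro h
      exact htne (List.append_eq_nil_iff.1 h).1
    have hts : ∀ x ∈ t, x ∈ s := by
      intro x hx; rw [← hrs]; exact List.mem_append.2 (Or.inl hx)
    have hQnd : Q.Nodup := by
      rw [hQdef, List.nodup_append]
      refine ⟨(List.takeWhile_sublist q).nodup hs_nd, ?_, ?_⟩
      · by_cases hP0e : P0 = []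
        · rw [hP0e]; exact List.nodup_nil
        · exact ((List.takeWhile_sublist q).nodup (hLnd bd₀ (hbd₀P hP0e).1))
      · intro x hxt y hxP hxy; subst hxy
        by_cases hP0e : P0 = []
        · rw [hP0e] at hxP; simp at hxP
        · exact hdisjS bd₀ (hbd₀P hP0e).1 x (hP0L x hxP) (hts x hxt)
    obtain ⟨zl, hzl⟩ : ∃ zl, Q.getLast? = some zl :=
      ⟨Q.getLast hQne, List.getLast?_eq_getLast_of_ne_nil hQne⟩
    have hzlQ : zl ∈ Q := by
      rw [List.getLast?_eq_getElem?] at hzl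
      exact List.mem_iff_getElem?.2 ⟨_, hzl⟩
    have hzlU : zl ∈ U := hQU zl hzlQ
    have hzlw : P0 = [] → zl = w := by
      intro h
      rw [hQdef, h, List.append_nil] at hzl
      exact Option.some_inj.1 (hzl.symm.trans hw)
    have hzlP : P0 ≠ [] → P0.getLast? = some zl := by
      intro h
      rw [hQdef, List.getLast?_append] at hzl
      obtain ⟨y, hy⟩ : ∃ y, P0.getLast? = some y :=
        ⟨P0.getLast h, List.getLast?_eq_getLast_of_ne_nil h⟩
      rw [hy] at hzl ⊢
      simpa using hzl
    -- the last of Q is a sink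
    have hzl_sink : ∀ z, E zl z → z ∉ U := by
      by_cases hP0e : P0 = []
      · rw [hzlw hP0e]; exact (hbd₀E hP0e).1
      · exact hGsink bd₀ (hbd₀P hP0e).1 (hbd₀P hP0e).2 zl (hzlP hP0e)
    -- classification of sinks
    have hsink_class : ∀ u : V, u ∈ U → (∀ z, E u z → z ∉ U) →
        zl = u ∨ ∃ bd ∈ bends, bd ≠ bd₀ ∧ bd.2.2 ∉ U ∧ bd.2.1.takeWhile q ≠ [] ∧
          (bd.2.1.takeWhile q).getLast? = some u := by
      intro u huU hsink
      rcases hcover u with hus | ⟨bd, hbd, huL⟩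
      · have hut := hS_mem u hus huU
        obtain ⟨i, hi⟩ := List.mem_iff_getElem?.1 hut
        have hilt : i < t.length := (List.getElem?_eq_some_iff.1 hi).1
        by_cases hi1 : i + 1 < t.length
        · exfalso
          obtain ⟨z, hz⟩ : ∃ z, t[i+1]? = some z := ⟨t[i+1], by simp [hi1]⟩
          have hzU : z ∈ U := htU z (List.mem_iff_getElem?.2 ⟨_, hz⟩)
          have : E u z := hEstaff i u z (by rw [ht_get i (by omega)]; exact hi)
            (by rw [ht_get (i+1) hi1]; exact hz)
          exact hsink z this hzU
        · have hieq : i = t.length - 1 := by omega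
          have huw : u = w := by
            rw [hieq] at hi
            exact Option.some_inj.1 (hi.symm.trans hwgt)
          by_cases hP0e : P0 = []
          · left; rw [hzlw hP0e, huw]
          · exfalso
            have hP0pos : 0 < P0.length := List.length_pos_iff.2 hP0e
            obtain ⟨z, hz⟩ : ∃ z, P0[0]? = some z := ⟨P0[0], by simp [hP0pos]⟩
            have hz' : bd₀.2.1[0]? = some z := by
              rw [hP_get bd₀ 0 hP0pos]; exact hz
            have hzU : z ∈ U := hP0U z (List.mem_iff_getElem?.2 ⟨0, hz⟩)
            have hEwz : E u z := by
              rw [huw, ← hbd₀w]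
              exact hE_a_head bd₀ (hbd₀P hP0e).1 z hz'
            exact hsink z hEwz hzU
      · have huP := hB_mem bd hbd u huL huU
        obtain ⟨ip, hip⟩ := List.mem_iff_getElem?.1 huP
        have hiplt : ip < (bd.2.1.takeWhile q).length :=
          (List.getElem?_eq_some_iff.1 hip).1
        have hPle : (bd.2.1.takeWhile q).length ≤ bd.2.1.length :=
          (List.takeWhile_prefix q).length_le
        by_cases hip1 : ip + 1 < (bd.2.1.takeWhile q).length
        · exfalso
          obtain ⟨z, hz⟩ : ∃ z, (bd.2.1.takeWhile q)[ip+1]? = some z :=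
            ⟨(bd.2.1.takeWhile q)[ip+1], by simp [hip1]⟩
          have hzU : z ∈ U := hPU bd z (List.mem_iff_getElem?.2 ⟨_, hz⟩)
          have : E u z := hEL bd hbd ip u z
            (by rw [hP_get bd ip (by omega)]; exact hip)
            (by rw [hP_get bd (ip+1) hip1]; exact hz)
          exact hsink z this hzU
        · have hipeq : ip = (bd.2.1.takeWhile q).length - 1 := by omega
          have hulast : (bd.2.1.takeWhile q).getLast? = some u := by
            rw [List.getLast?_eq_getElem?, ← hipeq]; exact hip
          have hbU : bd.2.2 ∉ U := by
            intro hbU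
            have hPeq := hfullP bd hbd hbU
            have hulastL : bd.2.1.getLast? = some u := by
              rw [List.getLast?_eq_getElem?, ← hPeq, ← hipeq]
              rw [← hP_get bd ip hiplt] at hip
              exact hip
            exact hsink bd.2.2 (hElast bd hbd u hulastL) hbU
          have hPne : bd.2.1.takeWhile q ≠ [] := by
            intro h; rw [h] at hiplt; simp at hiplt
          by_cases hbd₀eq : bd = bd₀
          · left
            rw [hbd₀eq] at hulast
            have := hzlP (by rw [hP0def, ← hbd₀eq]; exact hPne)
            rw [hP0def] at this
            exact Option.some_inj.1 (this.symm.trans hulast)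
          · exact Or.inr ⟨bd, hbd, hbd₀eq, hbU, hPne, hulast⟩
    -- the new bends
    set F : V × List V × V →
        Option (Option {v // v ∈ U} × List (Option {v // v ∈ U}) × Option {v // v ∈ U}) :=
      fun bd =>
        if bd.2.2 ∈ U then some (f bd.1, bd.2.1.map f, f bd.2.2)
        else if bd.2.1.takeWhile q = [] ∨ bd = bd₀ then none
        else some (f bd.1, (bd.2.1.takeWhile q).map f, none) with hFdef
    have hF_cases : ∀ bd bd2, F bd = some bd2 →
        (bd.2.2 ∈ U ∧ bd2 = (f bd.1, bd.2.1.map f, f bd.2.2)) ∨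
        (bd.2.2 ∉ U ∧ bd.2.1.takeWhile q ≠ [] ∧ bd ≠ bd₀ ∧
          bd2 = (f bd.1, (bd.2.1.takeWhile q).map f, none)) := by
      intro bd bd2 h
      simp only [hFdef] at h
      by_cases h1 : bd.2.2 ∈ U
      · rw [if_pos h1] at h
        exact Or.inl ⟨h1, (Option.some_inj.1 h).symm⟩
      · rw [if_neg h1] at h
        by_cases h2 : bd.2.1.takeWhile q = [] ∨ bd = bd₀
        · rw [if_pos h2] at h; cases h
        · rw [if_neg h2] at h
          push_neg at h2
          exact Or.inr ⟨h1, h2.1, h2.2, (Option.some_inj.1 h).symm⟩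
    have hF_full : ∀ bd, bd.2.2 ∈ U →
        F bd = some (f bd.1, bd.2.1.map f, f bd.2.2) := by
      intro bd h; simp only [hFdef]; rw [if_pos h]
    have hF_part : ∀ bd, bd.2.2 ∉ U → bd.2.1.takeWhile q ≠ [] → bd ≠ bd₀ →
        F bd = some (f bd.1, (bd.2.1.takeWhile q).map f, none) := by
      intro bd h1 h2 h3; simp only [hFdef]
      rw [if_neg h1, if_neg (by simp [h2, h3])]
    set bends2 := bends.filterMap F with hbends2def
    set s2 := Q.map f ++ [(none : Option {v // v ∈ U})] with hs2def
    have hQlen : t.length ≤ Q.length := by rw [hQdef]; simp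
    have hs2_get : ∀ i, i < Q.length → s2[i]? = (Q[i]?).map f := by
      intro i hi
      rw [hs2def, List.getElem?_append_left (by simpa using hi), List.getElem?_map]
    have hs2_none : s2[Q.length]? = some none := by
      rw [hs2def, List.getElem?_append_right (by simp)]
      simp
    have hnone_notin : (none : Option {v // v ∈ U}) ∉ Q.map f := by
      intro h
      obtain ⟨x, hx, hfx⟩ := List.mem_map.1 h
      rw [hf_some x (hQU x hx)] at hfx
      cases hfx
    have hQ_s : ∀ i, i < t.length → Q[i]? = s[i]? := by
      intro i hi
      rw [hQdef, List.getElem?_append_left hi, ht_get i hi]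
    refine ⟨s2, bends2, by simp [hs2def], ?_, ?_, ?_, ?_, ?_, ?_⟩
    · -- Nodup s2
      rw [hs2def, List.nodup_append]
      refine ⟨?_, List.nodup_singleton _, ?_⟩
      · refine hQnd.map_on ?_
        intro x hx y hy hxy
        rw [hf_some x (hQU x hx), hf_some y (hQU y hy)] at hxy
        cases hxy; rfl
      · intro x hx y hx' hxy
        simp only [List.mem_singleton] at hx'
        subst hx' hxy
        exact hnone_notin hx
    · -- bend endpoints
      intro bd2 hbd2
      obtain ⟨bd, hbd, hFbd⟩ := List.mem_filterMap.1 hbd2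
      obtain ⟨-, i, j, hij, hi, hj⟩ := hbends bd hbd
      rcases hF_cases bd bd2 hFbd with ⟨hbU, rfl⟩ | ⟨hbU, hPne, hne0, rfl⟩
      · refine ⟨by simp [(hbends bd hbd).1], i, j, hij, ?_, ?_⟩
        · have hiU : i < t.length := hS_idx i _ hi (hfull_aU bd hbd hbU)
          rw [hs2_get i (by omega), hQ_s i hiU, hi]
          rfl
        · have hjU : j < t.length := hS_idx j _ hj hbU
          rw [hs2_get j (by omega), hQ_s j hjU, hj]
          rfl
      · have hPpos : 0 < (bd.2.1.takeWhile q).length := List.length_pos_iff.2 hPne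
        obtain ⟨z, hz⟩ : ∃ z, (bd.2.1.takeWhile q)[0]? = some z :=
          ⟨(bd.2.1.takeWhile q)[0], by simp [hPpos]⟩
        have hz' : bd.2.1[0]? = some z := by rw [hP_get bd 0 hPpos]; exact hz
        have haU : bd.1 ∈ U := hU _ _ (hE_a_head bd hbd z hz')
          (hPU bd z (List.mem_iff_getElem?.2 ⟨0, hz⟩))
        have hiU : i < t.length := hS_idx i _ hi haU
        refine ⟨by simp [hPne], i, Q.length, by omega, ?_, ?_⟩
        · rw [hs2_get i (by omega), hQ_s i hiU, hi]
          rfl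
        · rw [hs2_none]
    · -- flatten Nodup
      set Gv : V × List V × V → Option (List V) := fun bd =>
        if bd.2.2 ∈ U then some bd.2.1
        else if bd.2.1.takeWhile q = [] ∨ bd = bd₀ then none
        else some (bd.2.1.takeWhile q) with hGdef
      have hmapeq : bends2.map (fun bd => bd.2.1) = (bends.filterMap Gv).map (List.map f) := by
        rw [hbends2def, List.map_filterMap, List.map_filterMap]
        congr 1
        funext bd
        simp only [hFdef, hGdef]
        split_ifs <;> rfl
      rw [hmapeq, ← List.map_flatten]
      have hsub : List.Sublist (bends.filterMap Gv).flatten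
          ((bends.map (fun bd => bd.2.1)).flatten) := by
        refine Cad.flatten_filterMap_sublist Gv _ ?_ bends
        intro a x hgx
        simp only [hGdef] at hgx
        by_cases h1 : a.2.2 ∈ U
        · rw [if_pos h1] at hgx
          obtain rfl := Option.some_inj.1 hgx
          exact List.Sublist.refl _
        · rw [if_neg h1] at hgx
          by_cases h2 : a.2.1.takeWhile q = [] ∨ a = bd₀
          · rw [if_pos h2] at hgx; cases hgx
          · rw [if_neg h2] at hgx
            obtain rfl := Option.some_inj.1 hgx
            exact List.takeWhile_sublist q
      have hndV : (bends.filterMap Gv).flatten.Nodup := hsub.nodup hflat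
      refine hndV.map_on ?_
      intro x hx y hy hxy
      have hmemU : ∀ z ∈ (bends.filterMap Gv).flatten, z ∈ U := by
        intro z hz
        obtain ⟨lz, hlz, hzl'⟩ := List.mem_flatten.1 hz
        obtain ⟨bd, hbd, hGbd⟩ := List.mem_filterMap.1 hlz
        simp only [hGdef] at hGbd
        by_cases h1 : bd.2.2 ∈ U
        · rw [if_pos h1] at hGbd
          rw [← Option.some_inj.1 hGbd] at hzl'
          obtain ⟨iz, hiz⟩ := List.mem_iff_getElem?.1 hzl'
          have hizlt : iz < bd.2.1.length := (List.getElem?_eq_some_iff.1 hiz).1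
          have : iz < (bd.2.1.takeWhile q).length := by
            rw [hfullP bd hbd h1]; exact hizlt
          rw [hP_get bd iz this] at hiz
          exact hPU bd z (List.mem_iff_getElem?.2 ⟨iz, hiz⟩)
        · rw [if_neg h1] at hGbd
          by_cases h2 : bd.2.1.takeWhile q = [] ∨ bd = bd₀
          · rw [if_pos h2] at hGbd; cases hGbd
          · rw [if_neg h2] at hGbd
            rw [← Option.some_inj.1 hGbd] at hzl'
            exact hPU bd z hzl'
      rw [hf_some x (hmemU x hx), hf_some y (hmemU y hy)] at hxy
      cases hxy; rfl
    · -- bend internals not on staff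
      intro bd2 hbd2 u' hu' hus2
      obtain ⟨bd, hbd, hFbd⟩ := List.mem_filterMap.1 hbd2
      have hx : ∃ x, x ∈ bd.2.1 ∧ x ∈ U ∧ u' = f x := by
        rcases hF_cases bd bd2 hFbd with ⟨hbU, rfl⟩ | ⟨hbU, hPne, hne0, rfl⟩
        · obtain ⟨x, hx, hfx⟩ := List.mem_map.1 hu'
          obtain ⟨iz, hiz⟩ := List.mem_iff_getElem?.1 hx
          have hizlt : iz < bd.2.1.length := (List.getElem?_eq_some_iff.1 hiz).1
          have hizP : iz < (bd.2.1.takeWhile q).length := by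
            rw [hfullP bd hbd hbU]; exact hizlt
          rw [hP_get bd iz hizP] at hiz
          exact ⟨x, hx, hPU bd x (List.mem_iff_getElem?.2 ⟨iz, hiz⟩), hfx.symm⟩
        · obtain ⟨x, hx, hfx⟩ := List.mem_map.1 hu'
          exact ⟨x, (List.takeWhile_sublist q).subset hx, hPU bd x hx, hfx.symm⟩
      obtain ⟨x, hxL, hxU, rfl⟩ := hx
      rw [hs2def] at hus2
      rcases List.mem_append.1 hus2 with h | h
      · obtain ⟨y, hy, hfy⟩ := List.mem_map.1 h
        have : y = x := by
          rw [hf_some x hxU] at hfy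
          exact hf_eq y _ hfy
        subst this
        rcases List.mem_append.1 hy with hyt | hyP
        · exact hdisjS bd hbd y hxL (hts y hyt)
        · have hP0ne : P0 ≠ [] := by intro h; rw [h] at hyP; simp at hyP
          by_cases hbdeq : bd = bd₀
          · rcases hF_cases bd bd2 hFbd with ⟨hbU, -⟩ | ⟨-, -, hne0, -⟩
            · exact (hbd₀P hP0ne).2 (hbdeq ▸ hbU)
            · exact hne0 hbdeq
          · exact hdisj2 bd hbd bd₀ (hbd₀P hP0ne).1 hbdeq y hxL (hP0L y hyP)
      · simp only [List.mem_singleton] at h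
        rw [hf_some x hxU] at h
        cases h
    · -- coverage
      intro v
      rcases v with _ | u
      · left; rw [hs2def]; simp
      · rcases hcover u.1 with hus | ⟨bd, hbd, huL⟩
        · left
          rw [hs2def]
          refine List.mem_append.2 (Or.inl ?_)
          rw [← hf_sub u]
          exact List.mem_map_of_mem (f := f) (List.mem_append.2 (Or.inl (hS_mem u.1 hus u.2)))
        · have huP := hB_mem bd hbd u.1 huL u.2
          by_cases hbU : bd.2.2 ∈ U
          · right
            refine ⟨(f bd.1, bd.2.1.map f, f bd.2.2),
              List.mem_filterMap.2 ⟨bd, hbd, hF_full bd hbU⟩, ?_⟩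
            rw [← hf_sub u]
            exact List.mem_map_of_mem (f := f) huL
          · by_cases hbdeq : bd = bd₀
            · left
              rw [hs2def]
              refine List.mem_append.2 (Or.inl ?_)
              rw [← hf_sub u]
              refine List.mem_map_of_mem (f := f) (List.mem_append.2 (Or.inr ?_))
              rw [hP0def, ← hbdeq]
              exact huP
            · right
              have hPne : bd.2.1.takeWhile q ≠ [] := by
                intro h; rw [h] at huP; simp at huP
              refine ⟨(f bd.1, (bd.2.1.takeWhile q).map f, none),
                List.mem_filterMap.2 ⟨bd, hbd, hF_part bd hbU hPne hbdeq⟩, ?_⟩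
              rw [← hf_sub u]
              exact List.mem_map_of_mem (f := f) huP
    · -- edges
      intro x y
      have hR1 : ∀ (u v : {v // v ∈ U}), AdjIn s2 (some u) (some v) ↔ AdjIn Q u.1 v.1 := by
        intro u v
        rw [hs2def]
        rw [Cad.adjIn_append_iff]
        constructor
        · rintro (h | h | ⟨h1, h2⟩)
          · rw [Cad.adjIn_map] at h
            obtain ⟨a, b, hab, hfa, hfb⟩ := h
            obtain rfl := hf_eq a u hfa
            obtain rfl := hf_eq b v hfb
            exact hab
          · exact absurd h Cad.not_adjIn_singleton
          · simp at h2
        · intro h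
          exact Or.inl ((Cad.adjIn_map f).2 ⟨u.1, v.1, h, hf_sub u, hf_sub v⟩)
      have hR2 : ∀ (u : {v // v ∈ U}), AdjIn s2 (some u) none ↔ zl = u.1 := by
        intro u
        rw [hs2def, Cad.adjIn_append_iff]
        constructor
        · rintro (h | h | ⟨h1, h2⟩)
          · exact absurd (Cad.adjIn_mem_right h) hnone_notin
          · exact absurd h Cad.not_adjIn_singleton
          · rw [List.getLast?_map, hzl] at h1
            simp only [Option.map_some] at h1
            exact hf_eq zl u (Option.some_inj.1 h1)
        · intro h
          refine Or.inr (Or.inr ⟨?_, rfl⟩)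
          rw [List.getLast?_map, hzl]
          simp only [Option.map_some, Option.some_inj]
          rw [h]
          exact hf_sub u
      have hR3 : ∀ y', ¬ AdjIn s2 (none : Option {v // v ∈ U}) y' := by
        intro y' hy'
        rw [hs2def] at hy'
        exact hnone_notin (Cad.adjIn_last_mem_dropLast hy')
      have hfullpath : ∀ bd : V × List V × V,
          (f bd.1 :: (bd.2.1.map f ++ [f bd.2.2])) = (bd.1 :: (bd.2.1 ++ [bd.2.2])).map f := by
        intro bd; simp
      have hpartpath : ∀ (a : V) (P : List V),
          (f a :: (P.map f ++ [(none : Option {v // v ∈ U})])) = ((a :: P).map f) ++ [none] := by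
        intro a P; simp
      have hLmemU : ∀ bd ∈ bends, bd.2.2 ∈ U → ∀ x ∈ bd.2.1, x ∈ U := by
        intro bd hbd hbU x hx
        obtain ⟨iz, hiz⟩ := List.mem_iff_getElem?.1 hx
        have hizlt : iz < bd.2.1.length := (List.getElem?_eq_some_iff.1 hiz).1
        have hizP : iz < (bd.2.1.takeWhile q).length := by
          rw [hfullP bd hbd hbU]; exact hizlt
        rw [hP_get bd iz hizP] at hiz
        exact hPU bd x (List.mem_iff_getElem?.2 ⟨iz, hiz⟩)
      have hfullU : ∀ bd ∈ bends, bd.2.2 ∈ U → ∀ x ∈ bd.1 :: (bd.2.1 ++ [bd.2.2]), x ∈ U := by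
        intro bd hbd hbU x hx
        rcases List.mem_cons.1 hx with rfl | hx
        · exact hfull_aU bd hbd hbU
        · rcases List.mem_append.1 hx with hx | hx
          · exact hLmemU bd hbd hbU x hx
          · rw [List.mem_singleton.1 hx]; exact hbU
      have ha_of_P : ∀ bd ∈ bends, bd.2.1.takeWhile q ≠ [] → bd.1 ∈ U := by
        intro bd hbd hPne
        have hPpos : 0 < (bd.2.1.takeWhile q).length := List.length_pos_iff.2 hPne
        obtain ⟨z, hz⟩ : ∃ z, (bd.2.1.takeWhile q)[0]? = some z :=
          ⟨(bd.2.1.takeWhile q)[0], by simp [hPpos]⟩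
        have hz' : bd.2.1[0]? = some z := by rw [hP_get bd 0 hPpos]; exact hz
        exact hU _ _ (hE_a_head bd hbd z hz')
          (hPU bd z (List.mem_iff_getElem?.2 ⟨0, hz⟩))
      have hnone_notin_map : ∀ (l : List V), (∀ x ∈ l, x ∈ U) →
          (none : Option {v // v ∈ U}) ∉ l.map f := by
        intro l hl h
        obtain ⟨x, hx, hfx⟩ := List.mem_map.1 h
        rw [hf_some x (hl x hx)] at hfx
        cases hfx
      have hpart_some_some : ∀ (a : V) (P : List V) (u v : {v // v ∈ U}),
          AdjIn (f a :: (P.map f ++ [none])) (some u) (some v) ↔ AdjIn (a :: P) u.1 v.1 := by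
        intro a P u v
        rw [hpartpath, Cad.adjIn_append_iff]
        constructor
        · rintro (h | h | ⟨h1, h2⟩)
          · rw [Cad.adjIn_map] at h
            obtain ⟨a', b', hab, hfa, hfb⟩ := h
            obtain rfl := hf_eq a' u hfa
            obtain rfl := hf_eq b' v hfb
            exact hab
          · exact absurd h Cad.not_adjIn_singleton
          · simp at h2
        · intro h
          exact Or.inl ((Cad.adjIn_map f).2 ⟨u.1, v.1, h, hf_sub u, hf_sub v⟩)
      have hpart_some_none : ∀ (a : V) (P : List V), P ≠ [] → (∀ x ∈ a :: P, x ∈ U) →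
          ∀ u : {v // v ∈ U},
          (AdjIn (f a :: (P.map f ++ [none])) (some u) none ↔ P.getLast? = some u.1) := by
        intro a P hPne hall u
        rw [hpartpath, Cad.adjIn_append_iff]
        have hgl : (a :: P).getLast? = P.getLast? := by
          have : a :: P = [a] ++ P := rfl
          rw [this, List.getLast?_append, List.getLast?_eq_getLast_of_ne_nil hPne]
          simp
        constructor
        · rintro (h | h | ⟨h1, h2⟩)
          · exact absurd (Cad.adjIn_mem_right h) (hnone_notin_map _ hall)
          · exact absurd h Cad.not_adjIn_singleton
          · rw [List.getLast?_map, hgl, List.getLast?_eq_getLast_of_ne_nil hPne] at h1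
            simp only [Option.map_some, Option.some_inj] at h1
            rw [List.getLast?_eq_getLast_of_ne_nil hPne, Option.some_inj]
            exact hf_eq _ u h1
        · intro h
          refine Or.inr (Or.inr ⟨?_, rfl⟩)
          rw [List.getLast?_map, hgl, h]
          simp only [Option.map_some, Option.some_inj]
          exact hf_sub u
      have hpart_none : ∀ (a : V) (P : List V), (∀ x ∈ a :: P, x ∈ U) →
          ∀ y', ¬ AdjIn (f a :: (P.map f ++ [none])) (none : Option {v // v ∈ U}) y' := by
        intro a P hall y' h
        rw [hpartpath] at h
        exact (hnone_notin_map _ hall) (Cad.adjIn_last_mem_dropLast h)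
      have hnoneF : ∀ y' : Option {v // v ∈ U},
          ¬(AdjIn s2 none y' ∨ ∃ bd2 ∈ bends2,
            AdjIn (bd2.1 :: (bd2.2.1 ++ [bd2.2.2])) none y') := by
        rintro y' (h | ⟨bd2, hbd2, h⟩)
        · exact hR3 y' h
        · obtain ⟨bd, hbd, hFbd⟩ := List.mem_filterMap.1 hbd2
          rcases hF_cases bd bd2 hFbd with ⟨hbU, rfl⟩ | ⟨hbU, hPne, hne0, rfl⟩
          · dsimp only at h
            rw [hfullpath] at h
            have hm := Cad.adjIn_mem_left h
            obtain ⟨z, hz, hfz⟩ := List.mem_map.1 hm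
            rw [hf_some z (hfullU bd hbd hbU z hz)] at hfz
            cases hfz
          · dsimp only at h
            have hallP : ∀ x' ∈ bd.1 :: bd.2.1.takeWhile q, x' ∈ U := by
              intro x' hx'
              rcases List.mem_cons.1 hx' with rfl | hx'
              · exact ha_of_P bd hbd hPne
              · exact hPU bd x' hx'
            exact hpart_none bd.1 _ hallP y' h
      rcases x with _ | u
      · exact iff_of_false (fun hc => hc) (hnoneF y)
      · rcases y with _ | v
        · show (∀ z : {v // v ∈ U}, ¬ E u.1 z.1) ↔ _
          constructor
          · intro hsink
            have hsink' : ∀ z, E u.1 z → z ∉ U := fun z hz hzU => hsink ⟨z, hzU⟩ hz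
            rcases hsink_class u.1 u.2 hsink' with hzl' | ⟨bd, hbd, hne0, hbU, hPne, hlast⟩
            · exact Or.inl ((hR2 u).2 hzl')
            · refine Or.inr ⟨(f bd.1, (bd.2.1.takeWhile q).map f, none),
                List.mem_filterMap.2 ⟨bd, hbd, hF_part bd hbU hPne hne0⟩, ?_⟩
              have hallP : ∀ x' ∈ bd.1 :: bd.2.1.takeWhile q, x' ∈ U := by
                intro x' hx'
                rcases List.mem_cons.1 hx' with rfl | hx'
                · exact ha_of_P bd hbd hPne
                · exact hPU bd x' hx'
              exact (hpart_some_none bd.1 _ hPne hallP u).2 hlast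
          · rintro (h | ⟨bd2, hbd2, h⟩)
            · have hzu := (hR2 u).1 h
              intro z hEz
              exact hzl_sink z.1 (by rw [hzu]; exact hEz) z.2
            · obtain ⟨bd, hbd, hFbd⟩ := List.mem_filterMap.1 hbd2
              rcases hF_cases bd bd2 hFbd with ⟨hbU, rfl⟩ | ⟨hbU, hPne, hne0, rfl⟩
              · dsimp only at h
                rw [hfullpath, Cad.adjIn_map] at h
                obtain ⟨a', b', hab, hfa, hfb⟩ := h
                exfalso
                have hb' := Cad.adjIn_mem_right hab
                rw [hf_some b' (hfullU bd hbd hbU b' hb')] at hfb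
                cases hfb
              · dsimp only at h
                have hallP : ∀ x' ∈ bd.1 :: bd.2.1.takeWhile q, x' ∈ U := by
                  intro x' hx'
                  rcases List.mem_cons.1 hx' with rfl | hx'
                  · exact ha_of_P bd hbd hPne
                  · exact hPU bd x' hx'
                have hlast := (hpart_some_none bd.1 _ hPne hallP u).1 h
                intro z hEz
                exact hGsink bd hbd hbU u.1 hlast z.1 hEz z.2
        · show E u.1 v.1 ↔ _
          constructor
          · intro hEuv
            rcases (hE u.1 v.1).1 hEuv with hstf | ⟨bd, hbd, hadj⟩
            · obtain ⟨k, h1, h2⟩ := Cad.adjIn_iff.1 hstf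
              have hk1 : k + 1 < t.length := hS_idx (k+1) v.1 h2 v.2
              refine Or.inl ((hR1 u v).2 ?_)
              rw [hQdef]
              refine Cad.adjIn_append_left (Cad.adjIn_iff.2 ⟨k, ?_, ?_⟩)
              · rw [← ht_get k (by omega)]; exact h1
              · rw [← ht_get (k+1) hk1]; exact h2
            · by_cases hbU : bd.2.2 ∈ U
              · refine Or.inr ⟨(f bd.1, bd.2.1.map f, f bd.2.2),
                  List.mem_filterMap.2 ⟨bd, hbd, hF_full bd hbU⟩, ?_⟩
                show AdjIn (f bd.1 :: (bd.2.1.map f ++ [f bd.2.2])) (some u) (some v)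
                rw [hfullpath]
                exact (Cad.adjIn_map f).2 ⟨u.1, v.1, hadj, hf_sub u, hf_sub v⟩
              · obtain ⟨k, h1, h2⟩ := Cad.adjIn_iff.1 hadj
                rw [List.getElem?_cons_succ] at h2
                have hkL : k < bd.2.1.length ∧ bd.2.1[k]? = some v.1 := by
                  by_cases hk : k < bd.2.1.length
                  · rw [List.getElem?_append_left hk] at h2; exact ⟨hk, h2⟩
                  · exfalso
                    rw [List.getElem?_append_right (by omega)] at h2
                    have hlt : k - bd.2.1.length < 1 := by
                      have := (List.getElem?_eq_some_iff.1 h2).1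
                      simpa using this
                    have hke : k - bd.2.1.length = 0 := by omega
                    rw [hke] at h2
                    simp only [List.getElem?_cons_zero, Option.some_inj] at h2
                    exact hbU (h2 ▸ v.2)
                have hkP : k < (bd.2.1.takeWhile q).length := hB_idx bd hbd k v.1 hkL.2 v.2
                have hPle : (bd.2.1.takeWhile q).length ≤ bd.2.1.length :=
                  (List.takeWhile_prefix q).length_le
                have hadjP : AdjIn (bd.1 :: bd.2.1.takeWhile q) u.1 v.1 := by
                  refine Cad.adjIn_iff.2 ⟨k, ?_, ?_⟩
                  · cases k with
                    | zero => simpa using h1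
                    | succ k' =>
                      rw [List.getElem?_cons_succ] at h1 ⊢
                      rw [List.getElem?_append_left (by omega : k' < bd.2.1.length)] at h1
                      rw [← hP_get bd k' (by omega)]
                      exact h1
                  · rw [List.getElem?_cons_succ, ← hP_get bd k hkP]
                    exact hkL.2
                have hPne : bd.2.1.takeWhile q ≠ [] := by
                  intro hh; rw [hh] at hkP; simp at hkP
                by_cases hbdeq : bd = bd₀
                · refine Or.inl ((hR1 u v).2 ?_)
                  rw [hQdef]
                  subst hbdeq
                  rcases Cad.adjIn_cons_iff.1 hadjP with ⟨hu1, hhd⟩ | hP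
                  · refine Cad.adjIn_append_iff.2 (Or.inr (Or.inr ⟨?_, ?_⟩))
                    · rw [hu1, hbd₀w]; exact hw
                    · exact hhd
                  · exact Cad.adjIn_append_right hP
                · refine Or.inr ⟨(f bd.1, (bd.2.1.takeWhile q).map f, none),
                    List.mem_filterMap.2 ⟨bd, hbd, hF_part bd hbU hPne hbdeq⟩, ?_⟩
                  exact (hpart_some_some bd.1 _ u v).2 hadjP
          · rintro (h | ⟨bd2, hbd2, h⟩)
            · have hQadj := (hR1 u v).1 h
              rw [hQdef] at hQadj
              rcases Cad.adjIn_append_iff.1 hQadj with h' | h' | ⟨h1, h2⟩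
              · refine (hE u.1 v.1).2 (Or.inl ?_)
                rw [← hrs]
                exact Cad.adjIn_append_left h'
              · have hP0ne : P0 ≠ [] := by
                  intro hh; rw [hh] at h'; exact Cad.not_adjIn_nil h'
                refine (hE u.1 v.1).2 (Or.inr ⟨bd₀, (hbd₀P hP0ne).1, ?_⟩)
                exact hadjL bd₀ u.1 v.1 (Cad.adjIn_of_prefix (List.takeWhile_prefix q) h')
              · have hu1 : u.1 = w := by
                  rw [hw] at h1
                  exact (Option.some_inj.1 h1).symm
                have hP0ne : P0 ≠ [] := by
                  intro hh; rw [hh] at h2; simp at h2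
                have hP0pos : 0 < P0.length := List.length_pos_iff.2 hP0ne
                have hv0 : bd₀.2.1[0]? = some v.1 := by
                  rw [hP_get bd₀ 0 hP0pos]
                  rw [List.head?_eq_getElem?] at h2
                  exact h2
                refine (hE u.1 v.1).2 (Or.inr ⟨bd₀, (hbd₀P hP0ne).1, ?_⟩)
                refine Cad.adjIn_iff.2 ⟨0, by simp [hu1, hbd₀w], ?_⟩
                rw [List.getElem?_cons_succ, List.getElem?_append_left
                  (lt_of_lt_of_le hP0pos (List.takeWhile_prefix q).length_le)]
                exact hv0
            · obtain ⟨bd, hbd, hFbd⟩ := List.mem_filterMap.1 hbd2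
              rcases hF_cases bd bd2 hFbd with ⟨hbU, rfl⟩ | ⟨hbU, hPne, hne0, rfl⟩
              · dsimp only at h
                rw [hfullpath, Cad.adjIn_map] at h
                obtain ⟨a', b', hab, hfa, hfb⟩ := h
                obtain rfl := hf_eq a' u hfa
                obtain rfl := hf_eq b' v hfb
                exact hEbd bd hbd _ _ hab
              · dsimp only at h
                have hadjP := (hpart_some_some bd.1 _ u v).1 h
                rcases Cad.adjIn_cons_iff.1 hadjP with ⟨hu1, hhd⟩ | hP
                · have hPpos : 0 < (bd.2.1.takeWhile q).length := List.length_pos_iff.2 hPne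
                  have hv0 : bd.2.1[0]? = some v.1 := by
                    rw [hP_get bd 0 hPpos]
                    rw [List.head?_eq_getElem?] at hhd
                    exact hhd
                  rw [hu1]
                  exact hE_a_head bd hbd v.1 hv0
                · exact hEbd bd hbd _ _ (hadjL bd u.1 v.1
                    (Cad.adjIn_of_prefix (List.takeWhile_prefix q) hP))
end
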